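/- arXiv:2508.12958 — 8 statements merged into one kernel-verified Lean document; each statement's English description precedes it below -/
import Mathlib

section
/- Let T be a closed right-linear operator on a Clifford Banach module V and let s be a paravector. If Q_s[T] := T² - 2 s_0 T + |s|² (with domain dom(T²)) has a bounded everywhere-defined inverse, then the ℝ-linear operator T - 𝓘^R s (where (𝓘^R s)(v) = v s) is bijective from dom(T) onto V, with inverse Q_s[T]^{-1} composed appropriately; in particular (T - 𝓘^R s̄) Q_s[T]^{-1} (T - 𝓘^R s) v = v for all v ∈ dom(T) and (T - 𝓘^R s)(T - 𝓘^R s̄) Q_s[T]^{-1} v = v for all v ∈ V. -/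
noncomputable section

open scoped BigOperators

/-- The negative-definite quadratic form on `Fin d → ℝ`, so that the Clifford
algebra generators satisfy `eᵢ² = -1` and anticommute. -/
def negQ (d : ℕ) : QuadraticForm ℝ (Fin d → ℝ) :=
  QuadraticMap.weightedSumSquares ℝ (fun _ : Fin d => (-1 : ℝ))

/-- The real Clifford algebra ℝ_d. -/
abbrev Cl (d : ℕ) : Type := CliffordAlgebra (negQ d)

/-- The paravector `s₀ + s₁e₁ + ⋯ + s_d e_d`. -/
def pv {d : ℕ} (s₀ : ℝ) (v : Fin d → ℝ) : Cl d :=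
  algebraMap ℝ (Cl d) s₀ + CliffordAlgebra.ι (negQ d) v

/-- The Clifford conjugate `s₀ - s₁e₁ - ⋯ - s_d e_d` of a paravector. -/
def pvConj {d : ℕ} (s₀ : ℝ) (v : Fin d → ℝ) : Cl d :=
  algebraMap ℝ (Cl d) s₀ - CliffordAlgebra.ι (negQ d) v

/-- The squared modulus `s₀² + s₁² + ⋯ + s_d²` of a paravector. -/
def pvNormSq {d : ℕ} (s₀ : ℝ) (v : Fin d → ℝ) : ℝ := s₀ ^ 2 + ∑ i, v i ^ 2

/-- Right multiplication `v ↦ v·a` on a right Clifford module `V`. -/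
def rmul {d : ℕ} {V : Type*} [AddCommGroup V] [Module (Cl d)ᵐᵒᵖ V]
    (v : V) (a : Cl d) : V := MulOpposite.op a • v

/-- A right-linear operator `T : dom(T) ⊆ V → V` on a right Clifford module. -/
structure RightLinearOp (d : ℕ) (V : Type*) [AddCommGroup V]
    [Module (Cl d)ᵐᵒᵖ V] where
  dom : Set V
  toFun : V → V
  zero_mem : (0 : V) ∈ dom
  add_mem : ∀ ⦃v w : V⦄, v ∈ dom → w ∈ dom → v + w ∈ dom
  smul_mem : ∀ (a : (Cl d)ᵐᵒᵖ) ⦃v : V⦄, v ∈ dom → a • v ∈ dom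
  map_add' : ∀ ⦃v w : V⦄, v ∈ dom → w ∈ dom → toFun (v + w) = toFun v + toFun w
  map_smul' : ∀ (a : (Cl d)ᵐᵒᵖ) ⦃v : V⦄, v ∈ dom → toFun (a • v) = a • toFun v

namespace RightLinearOp

variable {d : ℕ} {V : Type*} [NormedAddCommGroup V] [NormedSpace ℝ V]
  [Module (Cl d)ᵐᵒᵖ V] [IsScalarTower ℝ (Cl d)ᵐᵒᵖ V]

/-- `T` is a closed operator: its graph is closed in `V × V`. -/
def IsClosedOp (T : RightLinearOp d V) : Prop :=
  IsClosed {p : V × V | p.1 ∈ T.dom ∧ p.2 = T.toFun p.1}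

/-- The domain of `T²`. -/
def dom2 (T : RightLinearOp d V) : Set V := {v | v ∈ T.dom ∧ T.toFun v ∈ T.dom}

/-- The operator `Q_s[T] = T² - 2s₀T + |s|²`, as a function (to be used on `dom2`);
it depends only on `s₀` and `|s|²` (denoted `nsq`). -/
def qs (T : RightLinearOp d V) (s₀ nsq : ℝ) (v : V) : V :=
  T.toFun (T.toFun v) - (2 * s₀) • T.toFun v + nsq • v

/-- `Qi` is a bounded, everywhere defined, two-sided inverse of
`Q_s[T] : dom(T²) → V`. -/
def IsQInv (T : RightLinearOp d V) (s₀ nsq : ℝ) (Qi : V →L[ℝ] V) : Prop :=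
  (∀ v : V, Qi v ∈ T.dom2) ∧
  (∀ v ∈ T.dom2, Qi (T.qs s₀ nsq v) = v) ∧
  (∀ v : V, T.qs s₀ nsq (Qi v) = v)

/-- The paravector `s = (s₀, sv)` belongs to the `S`-resolvent set of `T`,
i.e. `Q_s[T]⁻¹ ∈ B(V)`. -/
def InRhoS (T : RightLinearOp d V) (s₀ : ℝ) (sv : Fin d → ℝ) : Prop :=
  ∃ Qi : V →L[ℝ] V, T.IsQInv s₀ (pvNormSq s₀ sv) Qi

end RightLinearOp

section Helpers

variable {d : ℕ} {V : Type*} [NormedAddCommGroup V] [NormedSpace ℝ V]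
  [Module (Cl d)ᵐᵒᵖ V] [IsScalarTower ℝ (Cl d)ᵐᵒᵖ V]

lemma negQ_apply {d : ℕ} (v : Fin d → ℝ) : negQ d v = -∑ i, v i ^ 2 := by
  simp [negQ, QuadraticMap.weightedSumSquares_apply, sq, Finset.sum_neg_distrib]

lemma pv_mul_pvConj {d : ℕ} (s₀ : ℝ) (sv : Fin d → ℝ) :
    pv s₀ sv * pvConj s₀ sv = algebraMap ℝ (Cl d) (pvNormSq s₀ sv) := by
  unfold pv pvConj pvNormSq
  rw [add_mul, mul_sub, mul_sub, CliffordAlgebra.ι_sq_scalar,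
    ← Algebra.commutes s₀ (CliffordAlgebra.ι (negQ d) sv), negQ_apply,
    sub_add_sub_cancel, ← map_mul, ← map_sub]
  congr 1
  ring

lemma pvConj_mul_pv {d : ℕ} (s₀ : ℝ) (sv : Fin d → ℝ) :
    pvConj s₀ sv * pv s₀ sv = algebraMap ℝ (Cl d) (pvNormSq s₀ sv) := by
  have h := pv_mul_pvConj s₀ (-sv)
  simpa [pv, pvConj, pvNormSq, map_neg, sub_eq_add_neg, neg_sq] using h

lemma pv_add_pvConj {d : ℕ} (s₀ : ℝ) (sv : Fin d → ℝ) :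
    pv s₀ sv + pvConj s₀ sv = algebraMap ℝ (Cl d) (2 * s₀) := by
  unfold pv pvConj
  rw [map_mul, map_ofNat, two_mul]
  abel

lemma pv_quadratic {d : ℕ} (s₀ : ℝ) (sv : Fin d → ℝ) :
    pv s₀ sv * pv s₀ sv - algebraMap ℝ (Cl d) (2 * s₀) * pv s₀ sv
      + algebraMap ℝ (Cl d) (pvNormSq s₀ sv) = 0 := by
  have h : algebraMap ℝ (Cl d) (2 * s₀) * pv s₀ sv
      = pv s₀ sv * pv s₀ sv + algebraMap ℝ (Cl d) (pvNormSq s₀ sv) := by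
    rw [Algebra.commutes (2 * s₀) (pv s₀ sv), ← pv_add_pvConj s₀ sv, mul_add,
      pv_mul_pvConj]
  rw [h]; abel

lemma rmul_rmul (v : V) (a b : Cl d) : rmul (rmul v a) b = rmul v (a * b) := by
  simp [rmul, ← mul_smul, ← MulOpposite.op_mul]

lemma rmul_algebraMap (v : V) (r : ℝ) : rmul v (algebraMap ℝ (Cl d) r) = r • v := by
  rw [rmul, ← MulOpposite.algebraMap_apply, algebraMap_smul]

lemma rmul_sub_left (v w : V) (a : Cl d) : rmul (v - w) a = rmul v a - rmul w a :=
  smul_sub _ _ _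

lemma rmul_add_right (v : V) (a b : Cl d) : rmul v (a + b) = rmul v a + rmul v b := by
  simp [rmul, add_smul]

lemma rmul_sub_right (v : V) (a b : Cl d) : rmul v (a - b) = rmul v a - rmul v b := by
  simp [rmul, sub_smul]

lemma rmul_smul_real (v : V) (r : ℝ) (a : Cl d) : rmul v (r • a) = r • rmul v a := by
  rw [Algebra.smul_def, Algebra.commutes, ← rmul_rmul, rmul_algebraMap]

lemma rmul_zero_right (v : V) : rmul v (0 : Cl d) = 0 := by
  simp [rmul]

namespace RightLinearOp

variable (T : RightLinearOp d V)

lemma T_rmul {v : V} (hv : v ∈ T.dom) (a : Cl d) :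
    T.toFun (rmul v a) = rmul (T.toFun v) a := T.map_smul' _ hv

lemma rmul_mem {v : V} (hv : v ∈ T.dom) (a : Cl d) : rmul v a ∈ T.dom :=
  T.smul_mem _ hv

lemma neg_mem {v : V} (hv : v ∈ T.dom) : -v ∈ T.dom := by
  simpa using T.smul_mem (-1 : (Cl d)ᵐᵒᵖ) hv

lemma T_neg {v : V} (hv : v ∈ T.dom) : T.toFun (-v) = -T.toFun v := by
  have := T.map_smul' (-1 : (Cl d)ᵐᵒᵖ) hv
  simpa using this

lemma sub_mem {v w : V} (hv : v ∈ T.dom) (hw : w ∈ T.dom) : v - w ∈ T.dom := by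
  rw [sub_eq_add_neg]; exact T.add_mem hv (T.neg_mem hw)

lemma T_sub {v w : V} (hv : v ∈ T.dom) (hw : w ∈ T.dom) :
    T.toFun (v - w) = T.toFun v - T.toFun w := by
  rw [sub_eq_add_neg, T.map_add' hv (T.neg_mem hw), T.T_neg hw, sub_eq_add_neg]

/-- The factorization `(T - 𝓘ᴿb)(T - 𝓘ᴿa) = Q_s[T]` on `dom(T²)`, for any `a, b`
with `a * b = |s|²` and `a + b = 2s₀`. -/
lemma qs_factor (s₀ n : ℝ) (a b : Cl d)
    (hab : a * b = algebraMap ℝ (Cl d) n)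
    (hsum : a + b = algebraMap ℝ (Cl d) (2 * s₀))
    {v : V} (hv : v ∈ T.dom2) :
    T.toFun (T.toFun v - rmul v a) - rmul (T.toFun v - rmul v a) b
      = T.qs s₀ n v := by
  obtain ⟨h1, h2⟩ := hv
  rw [T.T_sub h2 (T.rmul_mem h1 a), T.T_rmul h1, rmul_sub_left, rmul_rmul, hab,
    rmul_algebraMap, RightLinearOp.qs]
  have hs : (2 * s₀) • T.toFun v = rmul (T.toFun v) a + rmul (T.toFun v) b := by
    rw [← rmul_add_right, hsum, rmul_algebraMap]
  rw [hs]; abel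

/-- If `a² - 2s₀ a + n = 0` and `Q` is invertible, then `T - 𝓘ᴿa` is injective. -/
lemma first_order_inj (s₀ n : ℝ) (a : Cl d)
    (ha : a * a - algebraMap ℝ (Cl d) (2 * s₀) * a + algebraMap ℝ (Cl d) n = 0)
    (Qi : V →L[ℝ] V) (hQi : T.IsQInv s₀ n Qi)
    {u : V} (hu : u ∈ T.dom) (h0 : T.toFun u - rmul u a = 0) : u = 0 := by
  have hTu : T.toFun u = rmul u a := by rwa [sub_eq_zero] at h0
  have hu2 : u ∈ T.dom2 := ⟨hu, hTu ▸ T.rmul_mem hu a⟩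
  have hq : T.qs s₀ n u = 0 := by
    rw [RightLinearOp.qs, hTu, T.T_rmul hu, hTu, rmul_rmul]
    have h2 : (2 * s₀) • rmul u a = rmul u (algebraMap ℝ (Cl d) (2 * s₀) * a) := by
      rw [← rmul_smul_real u (2 * s₀) a, Algebra.smul_def (2 * s₀) a]
    rw [h2, ← rmul_algebraMap (d := d) u n, ← rmul_sub_right, ← rmul_add_right, ha,
      rmul_zero_right]
  have := hQi.2.1 u hu2
  rw [hq, map_zero] at this
  exact this.symm

end RightLinearOp

end Helpers

open RightLinearOp in
/-- if `Q_s[T]` has a bounded everywhere-defined inverse `Qi`, then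
the ℝ-linear operator `T - 𝓘^R s` is bijective from `dom(T)` onto `V`; in
particular `(T - 𝓘^R s̄) Q_s[T]⁻¹ (T - 𝓘^R s) v = v` for all `v ∈ dom(T)` and
`(T - 𝓘^R s)(T - 𝓘^R s̄) Q_s[T]⁻¹ v = v` for all `v ∈ V`. -/
theorem qinv_implies_first_order_bijective {d : ℕ} {V : Type*}
    [NormedAddCommGroup V] [NormedSpace ℝ V]
    [Module (Cl d)ᵐᵒᵖ V] [IsScalarTower ℝ (Cl d)ᵐᵒᵖ V]
    (T : RightLinearOp d V) (hT : T.IsClosedOp)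
    (s₀ : ℝ) (sv : Fin d → ℝ) (Qi : V →L[ℝ] V)
    (hQi : T.IsQInv s₀ (pvNormSq s₀ sv) Qi) :
    Set.BijOn (fun v => T.toFun v - rmul v (pv s₀ sv)) T.dom Set.univ ∧
    (∀ v ∈ T.dom,
      Qi (T.toFun v - rmul v (pv s₀ sv)) ∈ T.dom2 ∧
      T.toFun (Qi (T.toFun v - rmul v (pv s₀ sv)))
        - rmul (Qi (T.toFun v - rmul v (pv s₀ sv))) (pvConj s₀ sv) = v) ∧
    (∀ v : V,
      T.toFun (T.toFun (Qi v) - rmul (Qi v) (pvConj s₀ sv))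
        - rmul (T.toFun (Qi v) - rmul (Qi v) (pvConj s₀ sv)) (pv s₀ sv) = v) := by
  set s := pv s₀ sv with hs_def
  set sc := pvConj s₀ sv with hsc_def
  set n := pvNormSq s₀ sv with hn_def
  have h1 : s * sc = algebraMap ℝ (Cl d) n := pv_mul_pvConj s₀ sv
  have h2 : sc * s = algebraMap ℝ (Cl d) n := pvConj_mul_pv s₀ sv
  have h3 : s + sc = algebraMap ℝ (Cl d) (2 * s₀) := pv_add_pvConj s₀ sv
  have h3' : sc + s = algebraMap ℝ (Cl d) (2 * s₀) := by rw [add_comm]; exact h3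
  have ha : s * s - algebraMap ℝ (Cl d) (2 * s₀) * s + algebraMap ℝ (Cl d) n = 0 :=
    pv_quadratic s₀ sv
  -- injectivity kernel fact
  have hinj : ∀ u ∈ T.dom, T.toFun u - rmul u s = 0 → u = 0 := fun u hu h0 =>
    T.first_order_inj s₀ n s ha Qi hQi hu h0
  -- linearity of `A := T - 𝓘ᴿ s` on differences
  have hAsub : ∀ x ∈ T.dom, ∀ y ∈ T.dom,
      T.toFun (x - y) - rmul (x - y) s
        = (T.toFun x - rmul x s) - (T.toFun y - rmul y s) := by
    intro x hx y hy
    rw [T.T_sub hx hy, rmul_sub_left]; abel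
  -- Part 3 : (T - 𝓘ᴿ s)(T - 𝓘ᴿ s̄) Qi v = v
  have part3 : ∀ v : V,
      T.toFun (T.toFun (Qi v) - rmul (Qi v) sc)
        - rmul (T.toFun (Qi v) - rmul (Qi v) sc) s = v := by
    intro v
    rw [T.qs_factor s₀ n sc s h2 h3' (hQi.1 v)]
    exact hQi.2.2 v
  -- Part 2 : (T - 𝓘ᴿ s̄) Qi (T - 𝓘ᴿ s) v = v for v ∈ dom T
  have part2 : ∀ v ∈ T.dom,
      Qi (T.toFun v - rmul v s) ∈ T.dom2 ∧
      T.toFun (Qi (T.toFun v - rmul v s))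
        - rmul (Qi (T.toFun v - rmul v s)) sc = v := by
    intro v hv
    set w := Qi (T.toFun v - rmul v s) with hw_def
    have hw2 : w ∈ T.dom2 := hQi.1 _
    refine ⟨hw2, ?_⟩
    set x := T.toFun w - rmul w sc with hx_def
    have hx : x ∈ T.dom := T.sub_mem hw2.2 (T.rmul_mem hw2.1 sc)
    have hAx : T.toFun x - rmul x s = T.toFun v - rmul v s := by
      rw [hx_def, T.qs_factor s₀ n sc s h2 h3' hw2]
      exact hQi.2.2 _
    have h0 : T.toFun (x - v) - rmul (x - v) s = 0 := by
      rw [hAsub x hx v hv, hAx, sub_self]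
    have := hinj (x - v) (T.sub_mem hx hv) h0
    have hxv : x = v := by rwa [sub_eq_zero] at this
    exact hxv
  refine ⟨?_, part2, part3⟩
  refine ⟨fun _ _ => trivial, ?_, ?_⟩
  · -- injective on dom
    intro u hu u' hu' h
    have h' : T.toFun u - rmul u s = T.toFun u' - rmul u' s := h
    have h0 : T.toFun (u - u') - rmul (u - u') s = 0 := by
      rw [hAsub u hu u' hu', h', sub_self]
    have := hinj (u - u') (T.sub_mem hu hu') h0
    rwa [sub_eq_zero] at this
  · -- surjective onto univ
    intro u _
    exact ⟨T.toFun (Qi u) - rmul (Qi u) sc,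
      T.sub_mem (hQi.1 u).2 (T.rmul_mem (hQi.1 u).1 sc), part3 u⟩
end
end

section
/- Let T be a closed right-linear operator on a Clifford Banach module with nonempty S-resolvent set. Then for every paravector s, the operator Q_s[T] = T² - 2 s_0 T + |s|² (domain dom(T²)) is closed. -/
noncomputable section

open scoped BigOperators

section AuxLemmas

open RightLinearOp

variable {d : ℕ} {V : Type*} [NormedAddCommGroup V] [NormedSpace ℝ V]
  [Module (Cl d)ᵐᵒᵖ V] [IsScalarTower ℝ (Cl d)ᵐᵒᵖ V]

theorem RightLinearOp.rsmul_mem (T : RightLinearOp d V) (r : ℝ) {v : V}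
    (hv : v ∈ T.dom) : r • v ∈ T.dom := by
  rw [← algebraMap_smul ((Cl d)ᵐᵒᵖ) r v]
  exact T.smul_mem _ hv

theorem RightLinearOp.map_rsmul (T : RightLinearOp d V) (r : ℝ) {v : V}
    (hv : v ∈ T.dom) : T.toFun (r • v) = r • T.toFun v := by
  rw [← algebraMap_smul ((Cl d)ᵐᵒᵖ) r v, T.map_smul' _ hv, algebraMap_smul]

theorem RightLinearOp.comb_mem (T : RightLinearOp d V) (r n : ℝ) {a b c : V}
    (ha : a ∈ T.dom) (hb : b ∈ T.dom) (hc : c ∈ T.dom) :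
    a + r • b + n • c ∈ T.dom :=
  T.add_mem (T.add_mem ha (T.rsmul_mem r hb)) (T.rsmul_mem n hc)

theorem RightLinearOp.map_comb (T : RightLinearOp d V) (r n : ℝ) {a b c : V}
    (ha : a ∈ T.dom) (hb : b ∈ T.dom) (hc : c ∈ T.dom) :
    T.toFun (a + r • b + n • c) = T.toFun a + r • T.toFun b + n • T.toFun c := by
  rw [T.map_add' (T.add_mem ha (T.rsmul_mem r hb)) (T.rsmul_mem n hc),
    T.map_add' ha (T.rsmul_mem r hb), T.map_rsmul r hb, T.map_rsmul n hc]

theorem RightLinearOp.dom2_add (T : RightLinearOp d V) {a b : V}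
    (ha : a ∈ T.dom2) (hb : b ∈ T.dom2) : a + b ∈ T.dom2 :=
  ⟨T.add_mem ha.1 hb.1, by rw [T.map_add' ha.1 hb.1]; exact T.add_mem ha.2 hb.2⟩

theorem RightLinearOp.dom2_rsmul (T : RightLinearOp d V) (r : ℝ) {a : V}
    (ha : a ∈ T.dom2) : r • a ∈ T.dom2 :=
  ⟨T.rsmul_mem r ha.1, by rw [T.map_rsmul r ha.1]; exact T.rsmul_mem r ha.2⟩

theorem RightLinearOp.qs_add (T : RightLinearOp d V) (c n : ℝ) {a b : V}
    (ha : a ∈ T.dom2) (hb : b ∈ T.dom2) :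
    T.qs c n (a + b) = T.qs c n a + T.qs c n b := by
  simp only [RightLinearOp.qs]
  rw [T.map_add' ha.1 hb.1, T.map_add' ha.2 hb.2]
  module

theorem RightLinearOp.qs_rsmul (T : RightLinearOp d V) (c n r : ℝ) {a : V}
    (ha : a ∈ T.dom2) : T.qs c n (r • a) = r • T.qs c n a := by
  simp only [RightLinearOp.qs]
  rw [T.map_rsmul r ha.1, T.map_rsmul r ha.2]
  module

end AuxLemmas

open RightLinearOp in
/-- if `T` is closed with nonempty `S`-resolvent set, then
`Q_s[T]` (with domain `dom(T²)`) is closed for every paravector `s`. -/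
theorem qs_closed_of_rhoS_nonempty {d : ℕ} {V : Type*}
    [NormedAddCommGroup V] [NormedSpace ℝ V]
    [Module (Cl d)ᵐᵒᵖ V] [IsScalarTower ℝ (Cl d)ᵐᵒᵖ V]
    (T : RightLinearOp d V) (hT : T.IsClosedOp)
    (hρ : ∃ (q₀ : ℝ) (qv : Fin d → ℝ), T.InRhoS q₀ qv) :
    ∀ (s₀ : ℝ) (sv : Fin d → ℝ),
      IsClosed {p : V × V | p.1 ∈ T.dom2 ∧ p.2 = T.qs s₀ (pvNormSq s₀ sv) p.1} := by
  obtain ⟨q₀, qv, Qi, hQ1, hQ2, hQ3⟩ := hρ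
  intro s₀ sv
  set nq := pvNormSq q₀ qv with hnqdef
  set ns := pvNormSq s₀ sv with hnsdef
  -- expression for T² on the range of Qi
  have hffu : ∀ x : V, T.toFun (T.toFun (Qi x))
      = x + (2 * q₀) • T.toFun (Qi x) + (-nq) • Qi x := by
    intro x
    have h := hQ3 x
    simp only [RightLinearOp.qs] at h
    linear_combination (norm := module) h
  -- T (Qi x) ∈ dom2 whenever x ∈ dom T
  have hfQi_dom2 : ∀ x ∈ T.dom, T.toFun (Qi x) ∈ T.dom2 := by
    intro x hx
    refine ⟨(hQ1 x).2, ?_⟩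
    rw [hffu x]
    exact T.comb_mem _ _ hx (hQ1 x).2 (hQ1 x).1
  -- Q_q (T (Qi x)) = T x for x ∈ dom T
  have hqsTQi : ∀ x ∈ T.dom, T.qs q₀ nq (T.toFun (Qi x)) = T.toFun x := by
    intro x hx
    have h3 : T.toFun (T.toFun (T.toFun (Qi x)))
        = T.toFun x + (2 * q₀) • T.toFun (T.toFun (Qi x))
          + (-nq) • T.toFun (Qi x) := by
      conv_lhs => rw [hffu x]
      exact T.map_comb _ _ hx (hQ1 x).2 (hQ1 x).1
    simp only [RightLinearOp.qs]
    linear_combination (norm := module) h3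
  -- Qi commutes with T on dom T
  have hcomm : ∀ x ∈ T.dom, Qi (T.toFun x) = T.toFun (Qi x) := by
    intro x hx
    have h := hQ2 (T.toFun (Qi x)) (hfQi_dom2 x hx)
    rw [hqsTQi x hx] at h
    exact h
  -- sequential closedness
  apply IsSeqClosed.isClosed
  intro x p hxmem hxlim
  have htv : Filter.Tendsto (fun n => (x n).1) Filter.atTop (nhds p.1) :=
    (continuous_fst.tendsto p).comp hxlim
  have htw : Filter.Tendsto (fun n => (x n).2) Filter.atTop (nhds p.2) :=
    (continuous_snd.tendsto p).comp hxlim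
  have hQiv : Filter.Tendsto (fun n => Qi (x n).1) Filter.atTop (nhds (Qi p.1)) :=
    (Qi.continuous.tendsto _).comp htv
  have hQiw : Filter.Tendsto (fun n => Qi (x n).2) Filter.atTop (nhds (Qi p.2)) :=
    (Qi.continuous.tendsto _).comp htw
  have hdn : ∀ n, (x n).1 ∈ T.dom2 := fun n => (hxmem n).1
  -- the key pointwise identity
  have key : ∀ n, (x n).1 = Qi (x n).2
      + (2 * (s₀ - q₀)) • T.toFun (Qi (x n).1) + (nq - ns) • Qi (x n).1 := by
    intro n
    have e1 : T.qs q₀ nq (x n).1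
        = (x n).2 + (2 * (s₀ - q₀)) • T.toFun (x n).1 + (nq - ns) • (x n).1 := by
      rw [(hxmem n).2]
      simp only [RightLinearOp.qs]
      module
    calc (x n).1 = Qi (T.qs q₀ nq (x n).1) := (hQ2 _ (hdn n)).symm
      _ = Qi ((x n).2 + (2 * (s₀ - q₀)) • T.toFun (x n).1 + (nq - ns) • (x n).1) := by
          rw [e1]
      _ = Qi (x n).2 + (2 * (s₀ - q₀)) • Qi (T.toFun (x n).1)
            + (nq - ns) • Qi (x n).1 := by
          simp [map_add, map_smul]
      _ = Qi (x n).2 + (2 * (s₀ - q₀)) • T.toFun (Qi (x n).1)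
            + (nq - ns) • Qi (x n).1 := by
          rw [hcomm _ (hdn n).1]
  -- pass to the limit
  have hveq : p.1 = Qi p.2 + (2 * (s₀ - q₀)) • T.toFun (Qi p.1) + (nq - ns) • Qi p.1 := by
    by_cases hb : (2 * (s₀ - q₀)) = 0
    · rw [hb, zero_smul, add_zero]
      refine tendsto_nhds_unique htv ?_
      have hr : Filter.Tendsto (fun n => Qi (x n).2 + (nq - ns) • Qi (x n).1)
          Filter.atTop (nhds (Qi p.2 + (nq - ns) • Qi p.1)) :=
        hQiw.add (hQiv.const_smul _)
      refine hr.congr (fun n => ?_)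
      have hk := key n
      rw [hb, zero_smul, add_zero] at hk
      exact hk.symm
    · have hfb : ∀ n, T.toFun (Qi (x n).1)
          = (2 * (s₀ - q₀))⁻¹ • ((x n).1 - Qi (x n).2 - (nq - ns) • Qi (x n).1) := by
        intro n
        have hk : (x n).1 - Qi (x n).2 - (nq - ns) • Qi (x n).1
            = (2 * (s₀ - q₀)) • T.toFun (Qi (x n).1) := by
          nth_rewrite 1 [key n]
          abel
        rw [hk, smul_smul, inv_mul_cancel₀ hb, one_smul]
      have hXlim : Filter.Tendsto (fun n => T.toFun (Qi (x n).1)) Filter.atTop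
          (nhds ((2 * (s₀ - q₀))⁻¹ • (p.1 - Qi p.2 - (nq - ns) • Qi p.1))) := by
        have h1 : Filter.Tendsto
            (fun n => (2 * (s₀ - q₀))⁻¹ • ((x n).1 - Qi (x n).2 - (nq - ns) • Qi (x n).1))
            Filter.atTop
            (nhds ((2 * (s₀ - q₀))⁻¹ • (p.1 - Qi p.2 - (nq - ns) • Qi p.1))) :=
          ((htv.sub hQiw).sub (hQiv.const_smul _)).const_smul _
        exact h1.congr (fun n => (hfb n).symm)
      have hTseq := hT.isSeqClosed
        (x := fun n => (Qi (x n).1, T.toFun (Qi (x n).1)))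
        (p := (Qi p.1, (2 * (s₀ - q₀))⁻¹ • (p.1 - Qi p.2 - (nq - ns) • Qi p.1)))
        (fun n => ⟨(hQ1 _).1, rfl⟩) (hQiv.prodMk_nhds hXlim)
      have hXeq : (2 * (s₀ - q₀))⁻¹ • (p.1 - Qi p.2 - (nq - ns) • Qi p.1)
          = T.toFun (Qi p.1) := hTseq.2
      refine tendsto_nhds_unique htv ?_
      have h1 := (hQiw.add (hXlim.const_smul (2 * (s₀ - q₀)))).add (hQiv.const_smul (nq - ns))
      rw [hXeq] at h1
      exact h1.congr (fun n => (key n).symm)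
  -- bootstrap: p.1 ∈ dom2 and Q_s p.1 = p.2
  have hu2 := hQ1 p.1
  have hw2 := hQ1 p.2
  have hvdom : p.1 ∈ T.dom := by
    rw [hveq]
    exact T.comb_mem _ _ hw2.1 hu2.2 hu2.1
  have hfu2 : T.toFun (Qi p.1) ∈ T.dom2 := hfQi_dom2 p.1 hvdom
  have hv2 : p.1 ∈ T.dom2 := by
    rw [hveq]
    exact T.dom2_add (T.dom2_add hw2 (T.dom2_rsmul _ hfu2)) (T.dom2_rsmul _ hu2)
  have hqv : T.qs q₀ nq p.1 = p.2 + (2 * (s₀ - q₀)) • T.toFun p.1 + (nq - ns) • p.1 := by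
    conv_lhs => rw [hveq]
    rw [T.qs_add _ _ (T.dom2_add hw2 (T.dom2_rsmul _ hfu2)) (T.dom2_rsmul _ hu2),
      T.qs_add _ _ hw2 (T.dom2_rsmul _ hfu2),
      T.qs_rsmul _ _ _ hfu2, T.qs_rsmul _ _ _ hu2,
      hQ3 p.2, hqsTQi p.1 hvdom, hQ3 p.1]
  refine ⟨hv2, ?_⟩
  have hfin : T.qs s₀ ns p.1 = p.2 := by
    simp only [RightLinearOp.qs] at hqv ⊢
    linear_combination (norm := module) hqv
  exact hfin.symm
end
end

section
/- Let T be a densely defined right-linear operator on a Hilbert module V over ℝ_d, with adjoint T* defined via Sc⟨T* w, v⟩ = Sc⟨w, T v⟩. Then T* is right-linear, its domain equals { w : ∃ v_w, ⟨v_w, v⟩ = ⟨w, T v⟩ for all v ∈ dom(T) }, and ⟨T* w, v⟩ = ⟨w, T v⟩ for all v ∈ dom(T), w ∈ dom(T*), where ⟨·,·⟩ is the full ℝ_d-valued inner product. -/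
noncomputable section

open scoped BigOperators

/-- Clifford conjugation on ℝ_d (composite of involution and reversal). -/
def clConj {d : ℕ} (a : Cl d) : Cl d :=
  CliffordAlgebra.reverse (CliffordAlgebra.involute a)

open RightLinearOp in
/-- for a densely defined right-linear operator `T` on a Hilbert
module `V` over ℝ_d, the adjoint `T*` (defined via the scalar-part pairing
`Sc⟨T*w, v⟩ = Sc⟨w, Tv⟩`, i.e. the real inner product) is right-linear, its
domain equals `{w | ∃ v_w, ⟨v_w, v⟩ = ⟨w, Tv⟩ for all v ∈ dom T}` for the full
ℝ_d-valued inner product `cip`, and `⟨T*w, v⟩ = ⟨w, Tv⟩` holds with the full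
inner product. -/
theorem adjoint_right_linear_and_full_inner {d : ℕ} {V : Type*}
    [NormedAddCommGroup V] [InnerProductSpace ℝ V]
    [Module (Cl d)ᵐᵒᵖ V] [IsScalarTower ℝ (Cl d)ᵐᵒᵖ V]
    (cip : V → V → Cl d) (Sc : Cl d →ₗ[ℝ] ℝ)
    -- the full inner product is right-linear in the second argument:
    (hadd₂ : ∀ u v w : V, cip u (v + w) = cip u v + cip u w)
    (hsmul₂ : ∀ (u w : V) (a : Cl d), cip u (MulOpposite.op a • w) = cip u w * a)
    (hsmul₁ : ∀ (u w : V) (a : Cl d),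
      cip (MulOpposite.op a • u) w = clConj a * cip u w)
    (hconj : ∀ u w : V, clConj (cip u w) = cip w u)
    -- the scalar part of the full inner product is the real inner product:
    (hSc : ∀ u w : V, (inner ℝ u w : ℝ) = Sc (cip u w))
    -- components can be recovered from the scalar part:
    (hrec : ∀ a : Cl d, (∀ b : Cl d, Sc (a * b) = 0) → a = 0)
    (T : RightLinearOp d V) (hdense : Dense T.dom) :
    -- the domain of `T*` is characterized via the full inner product:
    ({w : V | ∃ u : V, ∀ v ∈ T.dom, (inner ℝ u v : ℝ) = inner ℝ w (T.toFun v)}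
      = {w : V | ∃ u : V, ∀ v ∈ T.dom, cip u v = cip w (T.toFun v)}) ∧
    -- `⟨T*w, v⟩ = ⟨w, Tv⟩` with the full inner product:
    (∀ w u : V, (∀ v ∈ T.dom, (inner ℝ u v : ℝ) = inner ℝ w (T.toFun v)) →
      ∀ v ∈ T.dom, cip u v = cip w (T.toFun v)) ∧
    -- `T*` is right-linear: if `u = T*w` then `u·a = T*(w·a)`:
    (∀ (a : Cl d) (w u : V),
      (∀ v ∈ T.dom, (inner ℝ u v : ℝ) = inner ℝ w (T.toFun v)) →
      ∀ v ∈ T.dom, (inner ℝ (MulOpposite.op a • u) v : ℝ)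
        = inner ℝ (MulOpposite.op a • w) (T.toFun v)) := by
  have key : ∀ w u : V, (∀ v ∈ T.dom, (inner ℝ u v : ℝ) = inner ℝ w (T.toFun v)) →
      ∀ v ∈ T.dom, cip u v = cip w (T.toFun v) := by
    intro w u h v hv
    have hz : cip u v - cip w (T.toFun v) = 0 := by
      apply hrec
      intro b
      have hvb : MulOpposite.op b • v ∈ T.dom := T.smul_mem _ hv
      have h1 := h _ hvb
      rw [hSc, hSc, T.map_smul' _ hv, hsmul₂, hsmul₂] at h1
      rw [sub_mul, map_sub, h1, sub_self]
    exact sub_eq_zero.mp hz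
  refine ⟨?_, key, ?_⟩
  · ext w
    simp only [Set.mem_setOf_eq]
    constructor
    · rintro ⟨u, hu⟩; exact ⟨u, key w u hu⟩
    · rintro ⟨u, hu⟩; exact ⟨u, fun v hv => by rw [hSc, hSc, hu v hv]⟩
  · intro a w u h v hv
    rw [hSc, hSc, hsmul₁, hsmul₁, key w u h v hv]
end
end

section
/- Let X be a measure space and h : X → ℝ_d measurable. The adjoint of the multiplication operator M_h f = h·f on the Hilbert module L²(X, ℝ_d) is the multiplication operator by the Clifford conjugate: (M_h)* = M_{h̄}. -/
noncomputable section

open scoped BigOperators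

open MeasureTheory

lemma clConj_mul {d : ℕ} (a b : Cl d) : clConj (a * b) = clConj b * clConj a := by
  unfold clConj
  rw [map_mul, CliffordAlgebra.reverse.map_mul]

lemma clConj_clConj {d : ℕ} (a : Cl d) : clConj (clConj a) = a := by
  unfold clConj
  rw [CliffordAlgebra.reverse_involute, CliffordAlgebra.reverse_reverse,
    CliffordAlgebra.involute_involute]

def clConjL (d : ℕ) : Cl d →ₗ[ℝ] Cl d :=
  (CliffordAlgebra.reverse (Q := negQ d)).comp
    (CliffordAlgebra.involute (Q := negQ d)).toLinearMap

/-- multiplication transported to Euclidean space, as a continuous bilinear map -/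
def mulE {d : ℕ} (ℓ : Cl d ≃ₗ[ℝ] EuclideanSpace ℝ (Fin (2 ^ d))) :
    EuclideanSpace ℝ (Fin (2 ^ d)) →L[ℝ]
      EuclideanSpace ℝ (Fin (2 ^ d)) →L[ℝ] EuclideanSpace ℝ (Fin (2 ^ d)) :=
  LinearMap.toContinuousLinearMap <|
    (LinearMap.toContinuousLinearMap :
        (EuclideanSpace ℝ (Fin (2 ^ d)) →ₗ[ℝ] EuclideanSpace ℝ (Fin (2 ^ d))) ≃ₗ[ℝ]
          _ →L[ℝ] _).toLinearMap ∘ₗ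
      (((LinearMap.mul ℝ (Cl d)).compl₁₂ ℓ.symm.toLinearMap ℓ.symm.toLinearMap).compr₂
        ℓ.toLinearMap)

lemma mulE_apply {d : ℕ} (ℓ : Cl d ≃ₗ[ℝ] EuclideanSpace ℝ (Fin (2 ^ d))) (a b : Cl d) :
    mulE ℓ (ℓ a) (ℓ b) = ℓ (a * b) := by
  simp [mulE]

/-- conjugation transported to Euclidean space -/
def cjE {d : ℕ} (ℓ : Cl d ≃ₗ[ℝ] EuclideanSpace ℝ (Fin (2 ^ d))) :
    EuclideanSpace ℝ (Fin (2 ^ d)) →L[ℝ] EuclideanSpace ℝ (Fin (2 ^ d)) :=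
  LinearMap.toContinuousLinearMap
    (ℓ.toLinearMap ∘ₗ clConjL d ∘ₗ ℓ.symm.toLinearMap)

lemma cjE_apply {d : ℕ} (ℓ : Cl d ≃ₗ[ℝ] EuclideanSpace ℝ (Fin (2 ^ d))) (a : Cl d) :
    cjE ℓ (ℓ a) = ℓ (clConj a) := by
  simp [cjE, clConjL, clConj]

lemma mulE_one {d : ℕ} (ℓ : Cl d ≃ₗ[ℝ] EuclideanSpace ℝ (Fin (2 ^ d)))
    (y : EuclideanSpace ℝ (Fin (2 ^ d))) : mulE ℓ y (ℓ 1) = y := by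
  have := mulE_apply ℓ (ℓ.symm y) 1
  rwa [mul_one, ℓ.apply_symm_apply] at this

set_option maxHeartbeats 2000000 in
theorem mul_adjoint_key' {d : ℕ} {X : Type*} [MeasurableSpace X] (μ : Measure X)
    (ℓ : Cl d ≃ₗ[ℝ] EuclideanSpace ℝ (Fin (2 ^ d)))
    (M : EuclideanSpace ℝ (Fin (2 ^ d)) →L[ℝ]
      EuclideanSpace ℝ (Fin (2 ^ d)) →L[ℝ] EuclideanSpace ℝ (Fin (2 ^ d)))
    (J : EuclideanSpace ℝ (Fin (2 ^ d)) →L[ℝ] EuclideanSpace ℝ (Fin (2 ^ d)))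
    (hM : ∀ a b : Cl d, M (ℓ a) (ℓ b) = ℓ (a * b))
    (hJ : ∀ a : Cl d, J (ℓ a) = ℓ (clConj a))
    (hM1 : ∀ y : EuclideanSpace ℝ (Fin (2 ^ d)), M y (ℓ 1) = y)
    (h : X → Cl d) (hmeas : AEStronglyMeasurable (fun x => ℓ (h x)) μ)
    (g : X → Cl d) (hg : MemLp (fun x => ℓ (g x)) 2 μ)
    (u : X → Cl d) (hu : MemLp (fun x => ℓ (u x)) 2 μ)
    (Hu : ∀ f : X → Cl d, MemLp (fun x => ℓ (f x)) 2 μ →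
        MemLp (fun x => ℓ (h x * f x)) 2 μ →
        ∫ x, ℓ (clConj (u x) * f x) ∂μ = ∫ x, ℓ (clConj (g x) * (h x * f x)) ∂μ) :
    u =ᵐ[μ] fun x => clConj (h x) * g x := by
  classical
  set A : X → EuclideanSpace ℝ (Fin (2 ^ d)) := fun x => J (ℓ (u x)) with hAdef
  set B : X → EuclideanSpace ℝ (Fin (2 ^ d)) := fun x => M (J (ℓ (g x))) (ℓ (h x)) with hBdef
  have hA_eq : ∀ x, A x = ℓ (clConj (u x)) := fun x => hJ (u x)
  have hB_eq : ∀ x, B x = ℓ (clConj (g x) * h x) := by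
    intro x
    simp only [hBdef]
    rw [hJ, hM]
  set H' := hmeas.mk _ with hH'def
  have hH'sm : StronglyMeasurable H' := hmeas.stronglyMeasurable_mk
  have hHae : (fun x => ℓ (h x)) =ᵐ[μ] H' := hmeas.ae_eq_mk
  set S : ℕ → Set X := fun n => {x | ‖H' x‖ ≤ (n : ℝ)} with hSdef
  have hS : ∀ n : ℕ, MeasurableSet (S n) :=
    fun n => measurableSet_le hH'sm.measurable.norm measurable_const
  -- membership in L²
  have hAmem : MemLp A 2 μ := J.comp_memLp' hu
  have hBsm : AEStronglyMeasurable B μ := by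
    have hcont : Continuous fun p :
        EuclideanSpace ℝ (Fin (2 ^ d)) × EuclideanSpace ℝ (Fin (2 ^ d)) => M p.1 p.2 :=
      M.isBoundedBilinearMap.continuous
    exact hcont.comp_aestronglyMeasurable
      ((J.continuous.comp_aestronglyMeasurable hg.aestronglyMeasurable).prodMk hmeas)
  have hBmem : ∀ (n : ℕ) (t : Set X), MeasurableSet t → (∀ x ∈ t, ‖H' x‖ ≤ (n : ℝ)) →
      MemLp B 2 (μ.restrict t) := by
    intro n t ht htn
    refine MemLp.of_le ((hg.restrict t).norm.const_mul (‖M‖ * ‖J‖ * n)) hBsm.restrict ?_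
    filter_upwards [ae_restrict_mem ht, ae_restrict_of_ae hHae] with x hxt hhx
    have h1 : ‖B x‖ ≤ ‖M‖ * ‖J (ℓ (g x))‖ * ‖ℓ (h x)‖ := M.le_opNorm₂ _ _
    have h2 : ‖J (ℓ (g x))‖ ≤ ‖J‖ * ‖ℓ (g x)‖ := J.le_opNorm _
    have h3 : ‖ℓ (h x)‖ ≤ (n : ℝ) := by rw [hhx]; exact htn x hxt
    have hb : ‖B x‖ ≤ ‖M‖ * ‖J‖ * (n : ℝ) * ‖ℓ (g x)‖ := by
      calc ‖B x‖ ≤ ‖M‖ * ‖J (ℓ (g x))‖ * ‖ℓ (h x)‖ := h1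
        _ ≤ ‖M‖ * (‖J‖ * ‖ℓ (g x)‖) * (n : ℝ) := by
            refine mul_le_mul (mul_le_mul_of_nonneg_left h2 M.opNorm_nonneg) h3
              (norm_nonneg _) (by positivity)
        _ = ‖M‖ * ‖J‖ * (n : ℝ) * ‖ℓ (g x)‖ := by ring
    calc ‖B x‖ ≤ ‖M‖ * ‖J‖ * (n : ℝ) * ‖ℓ (g x)‖ := hb
      _ = (‖M‖ * ‖J‖ * (n : ℝ)) * ‖ℓ (g x)‖ := by ring
      _ ≤ ‖(‖M‖ * ‖J‖ * (n : ℝ)) * ‖ℓ (g x)‖‖ := le_abs_self _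
  have hIntAB : ∀ (n : ℕ) (t : Set X), MeasurableSet t → (∀ x ∈ t, ‖H' x‖ ≤ (n : ℝ)) →
      μ t < ⊤ → IntegrableOn A t μ ∧ IntegrableOn B t μ := by
    intro n t ht htn htf
    haveI : IsFiniteMeasure (μ.restrict t) := ⟨by rwa [Measure.restrict_apply_univ]⟩
    exact ⟨(hAmem.restrict t).integrable one_le_two, (hBmem n t ht htn).integrable one_le_two⟩
  have key_t : ∀ (n : ℕ) (t : Set X), MeasurableSet t → (∀ x ∈ t, ‖H' x‖ ≤ (n : ℝ)) →
      μ t < ⊤ → ∫ x in t, (A x - B x) ∂μ = 0 := by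
    intro n t ht htn htf
    obtain ⟨hAint, hBint⟩ := hIntAB n t ht htn htf
    have test : ∀ c : Cl d, ∫ x in t, M (A x) (ℓ c) ∂μ = ∫ x in t, M (B x) (ℓ c) ∂μ := by
      intro c
      have hf1 : MemLp (fun x => ℓ (t.indicator (fun _ => c) x)) 2 μ := by
        have heq : (fun x => ℓ (t.indicator (fun _ => c) x)) = t.indicator fun _ => ℓ c := by
          funext x; by_cases hx : x ∈ t <;> simp [hx]
        rw [heq]; exact memLp_indicator_const 2 ht (ℓ c) (Or.inr htf.ne)
      have hf2 : MemLp (fun x => ℓ (h x * t.indicator (fun _ => c) x)) 2 μ := by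
        have heq : (fun x => ℓ (h x * t.indicator (fun _ => c) x))
            = t.indicator fun x => (M.flip (ℓ c)) (ℓ (h x)) := by
          funext x; by_cases hx : x ∈ t <;>
            simp [hx, ContinuousLinearMap.flip_apply, hM]
        rw [heq]
        refine MemLp.of_le
          (memLp_indicator_const 2 ht (‖M‖ * (n : ℝ) * ‖ℓ c‖ : ℝ) (Or.inr htf.ne))
          (((M.flip (ℓ c)).continuous.comp_aestronglyMeasurable hmeas).indicator ht) ?_
        filter_upwards [hHae] with x hhx
        by_cases hx : x ∈ t
        · rw [Set.indicator_of_mem hx, Set.indicator_of_mem hx]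
          have h3 : ‖ℓ (h x)‖ ≤ (n : ℝ) := by rw [hhx]; exact htn x hx
          have hle : ‖(M.flip (ℓ c)) (ℓ (h x))‖ ≤ ‖M‖ * (n : ℝ) * ‖ℓ c‖ := by
            have hflip : (M.flip (ℓ c)) (ℓ (h x)) = M (ℓ (h x)) (ℓ c) := rfl
            rw [hflip]
            calc ‖M (ℓ (h x)) (ℓ c)‖ ≤ ‖M‖ * ‖ℓ (h x)‖ * ‖ℓ c‖ := M.le_opNorm₂ _ _
              _ ≤ ‖M‖ * (n : ℝ) * ‖ℓ c‖ := by
                  exact mul_le_mul_of_nonneg_right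
                    (mul_le_mul_of_nonneg_left h3 M.opNorm_nonneg) (norm_nonneg _)
          exact hle.trans (le_abs_self _)
        · simp [hx]
      have hid := Hu _ hf1 hf2
      have hL : (fun x => ℓ (clConj (u x) * t.indicator (fun _ => c) x))
          = t.indicator fun x => M (A x) (ℓ c) := by
        funext x; by_cases hx : x ∈ t
        · simp only [Set.indicator_of_mem hx]
          rw [hA_eq, hM]
        · simp [hx]
      have hR : (fun x => ℓ (clConj (g x) * (h x * t.indicator (fun _ => c) x)))
          = t.indicator fun x => M (B x) (ℓ c) := by
        funext x; by_cases hx : x ∈ t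
        · simp only [Set.indicator_of_mem hx]
          rw [hB_eq, hM, ← mul_assoc]
        · simp [hx]
      rw [hL, hR, integral_indicator ht, integral_indicator ht] at hid
      exact hid
    have pull : ∀ c : Cl d,
        (M.flip (ℓ c)) (∫ x in t, A x ∂μ) = (M.flip (ℓ c)) (∫ x in t, B x ∂μ) := by
      intro c
      rw [← ContinuousLinearMap.integral_comp_comm _ hAint,
        ← ContinuousLinearMap.integral_comp_comm _ hBint]
      exact test c
    have hAB : ∫ x in t, A x ∂μ = ∫ x in t, B x ∂μ := by
      have hp := pull 1
      simp only [ContinuousLinearMap.flip_apply, hM1] at hp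
      exact hp
    rw [integral_sub hAint hBint, hAB, sub_self]
  have stepB : ∀ n : ℕ, (fun x => A x - B x) =ᵐ[μ.restrict (S n)] 0 := by
    intro n
    refine AEFinStronglyMeasurable.ae_eq_zero_of_forall_setIntegral_eq_zero ?_ ?_ ?_
    · intro s hs hμs
      rw [IntegrableOn, Measure.restrict_restrict hs]
      rw [Measure.restrict_apply hs] at hμs
      obtain ⟨h1, h2⟩ := hIntAB n (s ∩ S n) (hs.inter (hS n)) (fun x hx => hx.2) hμs
      exact h1.sub h2
    · intro s hs hμs
      rw [Measure.restrict_restrict hs]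
      rw [Measure.restrict_apply hs] at hμs
      exact key_t n (s ∩ S n) (hs.inter (hS n)) (fun x hx => hx.2) hμs
    · have h1 : MemLp A 2 (μ.restrict (S n)) := hAmem.restrict _
      have h2 : MemLp B 2 (μ.restrict (S n)) := hBmem n (S n) (hS n) (fun x hx => hx)
      exact (h1.sub h2).aefinStronglyMeasurable (by norm_num) (by norm_num)
  have stepC : ∀ᵐ x ∂μ, A x - B x = 0 := by
    have hcover : {x | ¬ (A x - B x = 0)} ⊆ ⋃ n : ℕ, ({x | ¬ (A x - B x = 0)} ∩ S n) := by
      intro x hx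
      obtain ⟨n, hn⟩ := exists_nat_ge ‖H' x‖
      exact Set.mem_iUnion.2 ⟨n, hx, hn⟩
    rw [ae_iff]
    refine measure_mono_null hcover (measure_iUnion_null fun n => ?_)
    have hb := stepB n
    rw [Filter.EventuallyEq, ae_iff] at hb
    simp only [Pi.zero_apply] at hb
    rw [Measure.restrict_apply' (hS n)] at hb
    exact hb
  have hfin : ∀ᵐ x ∂μ, A x = B x := stepC.mono fun x hx => by rwa [sub_eq_zero] at hx
  filter_upwards [hfin] with x hx
  have h5 : clConj (u x) = clConj (g x) * h x := by
    apply ℓ.injective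
    rw [← hA_eq, ← hB_eq, hx]
  have h6 := congrArg clConj h5
  rwa [clConj_clConj, clConj_mul, clConj_clConj] at h6


/-- the adjoint of the multiplication operator `M_h f = h·f` on
the Hilbert module `L²(X, ℝ_d)` (inner product `⟨f,g⟩ = ∫ conj(f x)·g x dμ`) is
multiplication by the Clifford conjugate: `(M_h)* = M_h̄`. The norm on ℝ_d is
transported from the Euclidean norm via the coordinate isomorphism `ℓ`
(coordinates with respect to the basis `e_A`), and `Sc` is the scalar part.
The adjoint statement reads: `g ∈ dom((M_h)*)` with `(M_h)* g = u` iff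
`u = conj(h)·g ∈ L²`, i.e. `dom((M_h)*) = dom(M_h̄)` and `(M_h)* = M_h̄`. -/
theorem adjoint_of_multiplication_operator {d : ℕ}
    {X : Type*} [MeasurableSpace X] (μ : Measure X)
    (ℓ : Cl d ≃ₗ[ℝ] EuclideanSpace ℝ (Fin (2 ^ d)))
    (Sc : Cl d →ₗ[ℝ] ℝ)
    (hSc : ∀ a : Cl d, Sc (clConj a * a) = ‖ℓ a‖ ^ 2)
    (h : X → Cl d) (hmeas : AEStronglyMeasurable (fun x => ℓ (h x)) μ)
    (g : X → Cl d) (hg : MemLp (fun x => ℓ (g x)) 2 μ) :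
    -- domain characterization: `g ∈ dom((M_h)*) ↔ conj(h)·g ∈ L²`:
    ((∃ u : X → Cl d, MemLp (fun x => ℓ (u x)) 2 μ ∧
        ∀ f : X → Cl d, MemLp (fun x => ℓ (f x)) 2 μ →
          MemLp (fun x => ℓ (h x * f x)) 2 μ →
          ∫ x, ℓ (clConj (u x) * f x) ∂μ = ∫ x, ℓ (clConj (g x) * (h x * f x)) ∂μ) ↔
      MemLp (fun x => ℓ (clConj (h x) * g x)) 2 μ) ∧
    -- action: any adjoint vector `u = (M_h)* g` equals `conj(h)·g` a.e.:
    (∀ u : X → Cl d, MemLp (fun x => ℓ (u x)) 2 μ →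
      (∀ f : X → Cl d, MemLp (fun x => ℓ (f x)) 2 μ →
        MemLp (fun x => ℓ (h x * f x)) 2 μ →
        ∫ x, ℓ (clConj (u x) * f x) ∂μ = ∫ x, ℓ (clConj (g x) * (h x * f x)) ∂μ) →
      u =ᵐ[μ] fun x => clConj (h x) * g x) := by
  have key : ∀ u : X → Cl d, MemLp (fun x => ℓ (u x)) 2 μ →
      (∀ f : X → Cl d, MemLp (fun x => ℓ (f x)) 2 μ →
        MemLp (fun x => ℓ (h x * f x)) 2 μ →
        ∫ x, ℓ (clConj (u x) * f x) ∂μ = ∫ x, ℓ (clConj (g x) * (h x * f x)) ∂μ) →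
      u =ᵐ[μ] fun x => clConj (h x) * g x := fun u hu Hu =>
    mul_adjoint_key' μ ℓ (mulE ℓ) (cjE ℓ) (mulE_apply ℓ) (cjE_apply ℓ) (mulE_one ℓ)
      h hmeas g hg u hu Hu
  refine ⟨⟨?_, ?_⟩, key⟩
  · rintro ⟨u, hu, Hu⟩
    have hae := key u hu Hu
    exact MemLp.ae_eq (hae.fun_comp ℓ) hu
  · intro hmem
    refine ⟨fun x => clConj (h x) * g x, hmem, fun f hf hhf => ?_⟩
    have : ∀ x, ℓ (clConj (clConj (h x) * g x) * f x) = ℓ (clConj (g x) * (h x * f x)) := by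
      intro x
      rw [clConj_mul, clConj_clConj, mul_assoc]
    simp only [this]
end
end

section
/- Let X be a σ-finite measure space and h : X → ℝ_d measurable with M_h the multiplication operator on L²(X). Then M_h is bounded and everywhere defined if and only if h ∈ L^∞(X), and in this case ‖h‖_{L^∞} ≤ ‖M_h‖ ≤ 2^{d/2} ‖h‖_{L^∞}. -/
noncomputable section

open scoped BigOperators

open MeasureTheory
open scoped ENNReal NNReal

/-- for σ-finite `X`, the multiplication operator `M_h` on
`L²(X, ℝ_d)` is bounded and everywhere defined iff `h ∈ L^∞(X)`, and in that
case `‖h‖_∞ ≤ ‖M_h‖ ≤ 2^{d/2} ‖h‖_∞`. The norm on ℝ_d is the Euclidean norm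
transported via `ℓ`; the product satisfies `|ab| ≤ 2^{d/2}|a||b|`. -/
theorem multiplication_operator_bounded_iff_Linfty {d : ℕ}
    {X : Type*} [MeasurableSpace X] (μ : Measure X) [SigmaFinite μ]
    (ℓ : Cl d ≃ₗ[ℝ] EuclideanSpace ℝ (Fin (2 ^ d)))
    (hone : ‖ℓ 1‖ = 1)
    (hsubmul : ∀ a b : Cl d, ‖ℓ (a * b)‖ ≤ 2 ^ ((d : ℝ) / 2) * ‖ℓ a‖ * ‖ℓ b‖)
    (h : X → Cl d) (hmeas : AEStronglyMeasurable (fun x => ℓ (h x)) μ) :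
    -- `M_h ∈ B(L²)` iff `h ∈ L^∞`:
    (((∀ f : X → Cl d, MemLp (fun x => ℓ (f x)) 2 μ →
        MemLp (fun x => ℓ (h x * f x)) 2 μ) ∧
      (∃ C : ℝ, 0 ≤ C ∧ ∀ f : X → Cl d, MemLp (fun x => ℓ (f x)) 2 μ →
        eLpNorm (fun x => ℓ (h x * f x)) 2 μ
          ≤ ENNReal.ofReal C * eLpNorm (fun x => ℓ (f x)) 2 μ)) ↔
      MemLp (fun x => ℓ (h x)) ⊤ μ) ∧
    -- `‖M_h‖ ≤ 2^{d/2} ‖h‖_∞`: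
    (∀ f : X → Cl d, MemLp (fun x => ℓ (f x)) 2 μ →
      eLpNorm (fun x => ℓ (h x * f x)) 2 μ
        ≤ ENNReal.ofReal (2 ^ ((d : ℝ) / 2)) * eLpNorm (fun x => ℓ (h x)) ⊤ μ
            * eLpNorm (fun x => ℓ (f x)) 2 μ) ∧
    -- `‖h‖_∞ ≤ ‖M_h‖`: any bound `C` for `M_h` dominates `‖h‖_∞`:
    (∀ C : ℝ, 0 ≤ C →
      (∀ f : X → Cl d, MemLp (fun x => ℓ (f x)) 2 μ →
        eLpNorm (fun x => ℓ (h x * f x)) 2 μ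
          ≤ ENNReal.ofReal C * eLpNorm (fun x => ℓ (f x)) 2 μ) →
      eLpNorm (fun x => ℓ (h x)) ⊤ μ ≤ ENNReal.ofReal C) := by
  classical
  set c : ℝ := 2 ^ ((d : ℝ) / 2) with hc_def
  have hc : 0 < c := by positivity
  -- the transported multiplication as a continuous bilinear map
  let B0 : EuclideanSpace ℝ (Fin (2 ^ d)) →ₗ[ℝ] EuclideanSpace ℝ (Fin (2 ^ d)) →ₗ[ℝ]
      EuclideanSpace ℝ (Fin (2 ^ d)) :=
    LinearMap.mk₂ ℝ (fun u v => ℓ (ℓ.symm u * ℓ.symm v))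
      (by intro m₁ m₂ n; simp [add_mul])
      (by intro a m n; simp [smul_mul_assoc])
      (by intro m n₁ n₂; simp [mul_add])
      (by intro a m n; simp [mul_smul_comm])
  let B : EuclideanSpace ℝ (Fin (2 ^ d)) →L[ℝ] EuclideanSpace ℝ (Fin (2 ^ d)) →L[ℝ]
      EuclideanSpace ℝ (Fin (2 ^ d)) :=
    B0.mkContinuous₂ c (fun u v => by
      simpa [B0] using hsubmul (ℓ.symm u) (ℓ.symm v))
  have hB : ∀ (a b : Cl d), B (ℓ a) (ℓ b) = ℓ (a * b) := by
    intro a b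
    simp [B, B0, LinearMap.mk₂_apply]
  -- measurability of products
  have hmul_meas : ∀ f : X → Cl d, AEStronglyMeasurable (fun x => ℓ (f x)) μ →
      AEStronglyMeasurable (fun x => ℓ (h x * f x)) μ := by
    intro f hf
    have := B.aestronglyMeasurable_comp₂ hmeas hf
    simpa only [hB] using this
  -- the upper bound `‖M_h f‖ ≤ 2^{d/2} ‖h‖_∞ ‖f‖`
  have bound2 : ∀ f : X → Cl d, AEStronglyMeasurable (fun x => ℓ (f x)) μ →
      eLpNorm (fun x => ℓ (h x * f x)) 2 μ
        ≤ ENNReal.ofReal c * eLpNorm (fun x => ℓ (h x)) ⊤ μ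
            * eLpNorm (fun x => ℓ (f x)) 2 μ := by
    intro f hf
    have key := eLpNorm_le_eLpNorm_top_mul_eLpNorm 2
      (fun x => c • ℓ (h x)) hf
      (fun u v => ℓ (ℓ.symm (c⁻¹ • u) * ℓ.symm v)) 1 ?_
    · have heq : (fun x => ℓ (ℓ.symm (c⁻¹ • (c • ℓ (h x))) * ℓ.symm (ℓ (f x))))
          = fun x => ℓ (h x * f x) := by
        funext x
        rw [inv_smul_smul₀ hc.ne', ℓ.symm_apply_apply, ℓ.symm_apply_apply]
      rw [heq] at key
      refine key.trans (le_of_eq ?_)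
      rw [ENNReal.coe_one, one_mul]
      have : (fun x => c • ℓ (h x)) = c • fun x => ℓ (h x) := rfl
      rw [this, eLpNorm_const_smul]
      have hcn : ((‖c‖₊ : ℝ≥0∞)) = ENNReal.ofReal c := by
        rw [← enorm_eq_nnnorm, ← ofReal_norm, Real.norm_of_nonneg hc.le]
      rw [enorm_eq_nnnorm, hcn, mul_assoc]
    · refine Filter.Eventually.of_forall fun x => ?_
      simp only [inv_smul_smul₀ hc.ne', ℓ.symm_apply_apply, one_mul]
      rw [← NNReal.coe_le_coe]
      push_cast
      calc ‖ℓ (h x * f x)‖ ≤ c * ‖ℓ (h x)‖ * ‖ℓ (f x)‖ := hsubmul _ _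
        _ = ‖c • ℓ (h x)‖ * ‖ℓ (f x)‖ := by
            rw [norm_smul, Real.norm_of_nonneg hc.le]
  -- the lower bound: any operator bound dominates `‖h‖_∞`
  have part3 : ∀ C : ℝ, 0 ≤ C →
      (∀ f : X → Cl d, MemLp (fun x => ℓ (f x)) 2 μ →
        eLpNorm (fun x => ℓ (h x * f x)) 2 μ
          ≤ ENNReal.ofReal C * eLpNorm (fun x => ℓ (f x)) 2 μ) →
      eLpNorm (fun x => ℓ (h x)) ⊤ μ ≤ ENNReal.ofReal C := by
    intro C hC0 hbound
    set g := hmeas.mk _ with hg_def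
    have hg : StronglyMeasurable g := hmeas.stronglyMeasurable_mk
    have hge : (fun x => ℓ (h x)) =ᵐ[μ] g := hmeas.ae_eq_mk
    rw [eLpNorm_congr_ae hge, eLpNorm_exponent_top]
    -- each level set `{‖g‖ ≥ C + 1/(n+1)}` is null
    have hmeasnorm : Measurable fun x => ‖g x‖ := hg.norm.measurable
    have hnull : ∀ n : ℕ, μ {x | C + 1 / (n + 1) ≤ ‖g x‖} = 0 := by
      intro n
      by_contra hA
      set ε : ℝ := 1 / (n + 1) with hε_def
      have hε : 0 < ε := by positivity
      have hAmeas : MeasurableSet {x | C + ε ≤ ‖g x‖} :=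
        hmeasnorm measurableSet_Ici
      obtain ⟨t, htmeas, hts, htpos, htfin⟩ :=
        MeasureTheory.Measure.exists_subset_measure_lt_top hAmeas
          (by exact pos_iff_ne_zero.2 hA)
      -- the test function: indicator of `t` with value `1`
      set f : X → Cl d := t.indicator (fun _ => (1 : Cl d)) with hf_def
      have hfℓ : (fun x => ℓ (f x)) = t.indicator fun _ => ℓ 1 := by
        funext x
        by_cases hx : x ∈ t <;> simp [hf_def, Set.indicator, hx]
      have hfmem : MemLp (fun x => ℓ (f x)) 2 μ := by
        rw [hfℓ]
        exact memLp_indicator_const 2 htmeas (ℓ 1) (Or.inr htfin.ne)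
      have hbf := hbound f hfmem
      -- rewrite `h * f` as an indicator
      have hhf : (fun x => ℓ (h x * f x)) = t.indicator fun x => ℓ (h x) := by
        funext x
        by_cases hx : x ∈ t <;> simp [hf_def, Set.indicator, hx]
      -- lower bound for the LHS
      have hone1 : ((‖ℓ (1 : Cl d)‖₊ : ℝ≥0∞)) = 1 := by
        rw [← enorm_eq_nnnorm, ← ofReal_norm, hone, ENNReal.ofReal_one]
      have hlow : eLpNorm (t.indicator fun _ => (C + ε : ℝ)) 2 μ
          ≤ eLpNorm (fun x => ℓ (h x * f x)) 2 μ := by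
        rw [hhf]
        refine eLpNorm_mono_ae ?_
        filter_upwards [hge] with x hx
        by_cases hxt : x ∈ t
        · have hxA : C + ε ≤ ‖g x‖ := hts hxt
          rw [Set.indicator_of_mem hxt, Set.indicator_of_mem hxt,
            Real.norm_of_nonneg (by positivity), hx]
          exact hxA
        · simp [Set.indicator_of_notMem hxt]
      rw [eLpNorm_indicator_const htmeas (by norm_num) (by norm_num)] at hlow
      have hrhs : eLpNorm (fun x => ℓ (f x)) 2 μ
          = μ t ^ (1 / (2 : ℝ≥0∞).toReal) := by
        rw [hfℓ, eLpNorm_indicator_const htmeas (by norm_num) (by norm_num),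
          enorm_eq_nnnorm, hone1, one_mul]
      rw [hrhs] at hbf
      have hchain : (‖(C + ε : ℝ)‖₊ : ℝ≥0∞) * μ t ^ (1 / (2 : ℝ≥0∞).toReal)
          ≤ ENNReal.ofReal C * μ t ^ (1 / (2 : ℝ≥0∞).toReal) :=
        le_trans hlow hbf
      have hpow_ne : μ t ^ (1 / (2 : ℝ≥0∞).toReal) ≠ 0 := by
        simp only [ne_eq, ENNReal.rpow_eq_zero_iff, not_or]
        constructor
        · rintro ⟨h1, -⟩; exact htpos.ne' h1
        · rintro ⟨h1, -⟩; exact htfin.ne h1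
      have hpow_fin : μ t ^ (1 / (2 : ℝ≥0∞).toReal) ≠ ∞ := by
        refine (ENNReal.rpow_lt_top_of_nonneg (by norm_num) htfin.ne).ne
      rw [ENNReal.mul_le_mul_iff_left hpow_ne hpow_fin] at hchain
      rw [← enorm_eq_nnnorm, ← ofReal_norm, Real.norm_of_nonneg (by positivity)] at hchain
      rw [ENNReal.ofReal_le_ofReal_iff hC0] at hchain
      linarith
    -- conclude `‖g‖ ≤ C` a.e.
    have hae : ∀ᵐ x ∂μ, ‖g x‖ ≤ C := by
      have hsub : {x | C < ‖g x‖} ⊆ ⋃ n : ℕ, {x | C + 1 / (n + 1) ≤ ‖g x‖} := by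
        intro x hx
        obtain ⟨n, hn⟩ := exists_nat_one_div_lt (sub_pos.2 (show C < ‖g x‖ from hx))
        exact Set.mem_iUnion.2 ⟨n, by
          simp only [Set.mem_setOf_eq]
          linarith⟩
      have : μ {x | C < ‖g x‖} = 0 :=
        measure_mono_null hsub (by
          rw [measure_iUnion_null_iff]; exact hnull)
      filter_upwards [measure_eq_zero_iff_ae_notMem.1 this] with x hx
      simpa using not_lt.1 hx
    refine essSup_le_of_ae_le _ ?_
    filter_upwards [hae] with x hx
    rw [← ofReal_norm]
    exact ENNReal.ofReal_le_ofReal hx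
  refine ⟨⟨?_, ?_⟩, fun f hf => bound2 f hf.1, part3⟩
  · rintro ⟨-, C, hC0, hC⟩
    exact ⟨hmeas, lt_of_le_of_lt (part3 C hC0 hC) ENNReal.ofReal_lt_top⟩
  · intro hmem
    constructor
    · intro f hf
      refine ⟨hmul_meas f hf.1, lt_of_le_of_lt (bound2 f hf.1) ?_⟩
      exact ENNReal.mul_lt_top (ENNReal.mul_lt_top ENNReal.ofReal_lt_top hmem.2) hf.2
    · refine ⟨c * (eLpNorm (fun x => ℓ (h x)) ⊤ μ).toReal,
        mul_nonneg hc.le ENNReal.toReal_nonneg, fun f hf => ?_⟩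
      refine (bound2 f hf.1).trans (le_of_eq ?_)
      rw [ENNReal.ofReal_mul hc.le, ENNReal.ofReal_toReal hmem.2.ne]
end
end

section
/- Let X be a σ-finite measure space and h : X → N(ℝ_d) measurable, where N(ℝ_d) = { s ∈ ℝ_d : s s̄ = s̄ s = |s|² }. Then: (i) M_h is injective if and only if h(x) ≠ 0 for a.e. x, in which case M_h^{-1} = M_{h^{-1}}; (ii) M_h is surjective if and only if there exists ε > 0 with |h(x)| ≥ ε for a.e. x. -/
noncomputable section

open scoped BigOperators

open MeasureTheory
open scoped ENNReal NNReal

/-- The set `N(ℝ_d) = { s : s s̄ = s̄ s = |s|² }` (with `|s|²` a real scalar),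
relative to the coordinate isomorphism `ℓ` giving the Euclidean norm. -/
def NSet {d : ℕ} (ℓ : Cl d ≃ₗ[ℝ] EuclideanSpace ℝ (Fin (2 ^ d))) : Set (Cl d) :=
  {s | s * clConj s = algebraMap ℝ (Cl d) (‖ℓ s‖ ^ 2) ∧
       clConj s * s = algebraMap ℝ (Cl d) (‖ℓ s‖ ^ 2)}

/-- Pointwise inverse `h⁻¹ = h̄/|h|²` of an `N(ℝ_d)`-valued function. -/
def hInv {d : ℕ} (ℓ : Cl d ≃ₗ[ℝ] EuclideanSpace ℝ (Fin (2 ^ d)))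
    {X : Type*} (h : X → Cl d) (x : X) : Cl d :=
  (‖ℓ (h x)‖ ^ 2)⁻¹ • clConj (h x)

-- ==== auxiliary lemmas ====
namespace Aux

variable {d : ℕ}

/-- `clConj` as a linear map. -/
def clConjL (d : ℕ) : Cl d →ₗ[ℝ] Cl d :=
  (CliffordAlgebra.reverse (Q := negQ d) (R := ℝ)).comp
    (CliffordAlgebra.involute (Q := negQ d)).toLinearMap

lemma clConj_eq (a : Cl d) : clConj a = clConjL d a := rfl

lemma clConj_one : clConj (1 : Cl d) = 1 := by
  simp [clConj]

lemma clConj_clConj (a : Cl d) : clConj (clConj a) = a := by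
  simp [clConj, ← CliffordAlgebra.reverse_involute, CliffordAlgebra.reverse_reverse,
    CliffordAlgebra.involute_involute]

variable (ℓ : Cl d ≃ₗ[ℝ] EuclideanSpace ℝ (Fin (2 ^ d)))

lemma norm_ne_zero_of_ne {a : Cl d} (ha : a ≠ 0) : ‖ℓ a‖ ≠ 0 := by
  simpa using ℓ.map_ne_zero_iff.mpr ha

lemma hInv_mul_self {X : Type*} (h : X → Cl d) (hN : ∀ x, h x ∈ NSet ℓ)
    (x : X) (hx : h x ≠ 0) : hInv ℓ h x * h x = 1 := by
  have hn : ‖ℓ (h x)‖ ≠ 0 := norm_ne_zero_of_ne ℓ hx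
  have h2 : (‖ℓ (h x)‖ ^ 2 : ℝ) ≠ 0 := pow_ne_zero _ hn
  rw [hInv, smul_mul_assoc, (hN x).2, Algebra.smul_def, ← map_mul,
    inv_mul_cancel₀ h2, map_one]

lemma self_mul_hInv {X : Type*} (h : X → Cl d) (hN : ∀ x, h x ∈ NSet ℓ)
    (x : X) (hx : h x ≠ 0) : h x * hInv ℓ h x = 1 := by
  have hn : ‖ℓ (h x)‖ ≠ 0 := norm_ne_zero_of_ne ℓ hx
  have h2 : (‖ℓ (h x)‖ ^ 2 : ℝ) ≠ 0 := pow_ne_zero _ hn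
  rw [hInv, mul_smul_comm, (hN x).1, Algebra.smul_def, ← map_mul,
    inv_mul_cancel₀ h2, map_one]

/-- conjugation transported to Euclidean space, as a continuous linear map. -/
def conjCLM : EuclideanSpace ℝ (Fin (2 ^ d)) →L[ℝ] EuclideanSpace ℝ (Fin (2 ^ d)) :=
  LinearMap.toContinuousLinearMap
    ((ℓ.toLinearMap.comp (clConjL d)).comp ℓ.symm.toLinearMap)

lemma conjCLM_apply (a : Cl d) : conjCLM ℓ (ℓ a) = ℓ (clConj a) := by
  simp [conjCLM, clConj_eq]

lemma conjCLM_norm_pos : 0 < ‖conjCLM ℓ‖ := by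
  have h1 : conjCLM ℓ (ℓ 1) = ℓ (1 : Cl d) := by
    rw [conjCLM_apply, clConj_one]
  have hne : conjCLM ℓ ≠ 0 := by
    intro h0
    have : ℓ (1 : Cl d) = 0 := by rw [← h1, h0]; rfl
    exact norm_ne_zero_of_ne ℓ (one_ne_zero) (by simp [this])
  exact norm_pos_iff.mpr hne

lemma norm_conj_lower (a : Cl d) : ‖ℓ a‖ ≤ ‖conjCLM ℓ‖ * ‖ℓ (clConj a)‖ := by
  have := (conjCLM ℓ).le_opNorm (ℓ (clConj a))
  rwa [conjCLM_apply, clConj_clConj] at this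

/-- multiplication transported to Euclidean space. -/
def mulCLM : EuclideanSpace ℝ (Fin (2 ^ d)) →L[ℝ]
    EuclideanSpace ℝ (Fin (2 ^ d)) →L[ℝ] EuclideanSpace ℝ (Fin (2 ^ d)) :=
  LinearMap.toContinuousLinearMap
    { toFun := fun a => LinearMap.toContinuousLinearMap
        { toFun := fun b => ℓ (ℓ.symm a * ℓ.symm b)
          map_add' := fun b c => by simp [mul_add]
          map_smul' := fun r b => by simp [mul_smul_comm] }
      map_add' := fun a b => by ext c; simp [add_mul]
      map_smul' := fun r a => by ext c; simp [smul_mul_assoc] }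

lemma mulCLM_apply (a b : Cl d) : mulCLM ℓ (ℓ a) (ℓ b) = ℓ (a * b) := by
  simp [mulCLM]

attribute [irreducible] conjCLM mulCLM

end Aux

namespace Aux

lemma exists_null_core {X : Type*} [MeasurableSpace X] (μ : Measure X) [SigmaFinite μ]
    {E : Type*} [NormedAddCommGroup E] {φh : X → E}
    (hmeas : AEStronglyMeasurable φh μ)
    (hne : ¬ ∀ᵐ x ∂μ, φh x ≠ 0) :
    ∃ T, MeasurableSet T ∧ 0 < μ T ∧ μ T < ⊤ ∧ ∀ᵐ x ∂μ, x ∈ T → φh x = 0 := by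
  set φ := hmeas.mk φh with hφdef
  have hφeq : φh =ᵐ[μ] φ := hmeas.ae_eq_mk
  have hSm : MeasurableSet {x | φ x = 0} :=
    hmeas.stronglyMeasurable_mk.measurableSet_eq_fun stronglyMeasurable_const
  have hSpos : 0 < μ {x | φ x = 0} := by
    rcases eq_or_ne (μ {x | φ x = 0}) 0 with h0 | h0
    · exfalso
      apply hne
      have h1 : ∀ᵐ x ∂μ, φ x ≠ 0 := by
        rw [ae_iff]; simpa [not_not] using h0
      filter_upwards [hφeq, h1] with x hx hx2
      rw [hx]; exact hx2
    · exact pos_iff_ne_zero.mpr h0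
  obtain ⟨T, hTm, hTsub, hTpos, hTfin⟩ :=
    MeasureTheory.Measure.exists_subset_measure_lt_top hSm hSpos
  refine ⟨T, hTm, hTpos, hTfin, ?_⟩
  filter_upwards [hφeq] with x hx hxT
  rw [hx]; exact hTsub hxT

end Aux

open Aux in
set_option maxHeartbeats 2000000 in
/-- for σ-finite `X` and `h : X → N(ℝ_d)` measurable:
(i) `M_h` is injective iff `h ≠ 0` a.e., in which case `M_h⁻¹ = M_{h⁻¹}`;
(ii) `M_h` is surjective iff `∃ ε > 0` with `|h| ≥ ε` a.e. -/
theorem multiplication_operator_injective_surjective {d : ℕ}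
    {X : Type*} [MeasurableSpace X] (μ : Measure X) [SigmaFinite μ]
    (ℓ : Cl d ≃ₗ[ℝ] EuclideanSpace ℝ (Fin (2 ^ d)))
    (h : X → Cl d) (hmeas : AEStronglyMeasurable (fun x => ℓ (h x)) μ)
    (hN : ∀ x : X, h x ∈ NSet ℓ) :
    -- (i) injectivity criterion:
    (((∀ f : X → Cl d, MemLp (fun x => ℓ (f x)) 2 μ →
        MemLp (fun x => ℓ (h x * f x)) 2 μ →
        (fun x => h x * f x) =ᵐ[μ] 0 → f =ᵐ[μ] 0)) ↔ (∀ᵐ x ∂μ, h x ≠ 0)) ∧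
    -- in the injective case the inverse is `M_{h⁻¹}`:
    ((∀ᵐ x ∂μ, h x ≠ 0) →
      (∀ f : X → Cl d, MemLp (fun x => ℓ (f x)) 2 μ →
        MemLp (fun x => ℓ (h x * f x)) 2 μ →
        (fun x => hInv ℓ h x * (h x * f x)) =ᵐ[μ] f) ∧
      (∀ g : X → Cl d, MemLp (fun x => ℓ (g x)) 2 μ →
        MemLp (fun x => ℓ (hInv ℓ h x * g x)) 2 μ →
        (fun x => h x * (hInv ℓ h x * g x)) =ᵐ[μ] g)) ∧
    -- (ii) surjectivity criterion:
    ((∀ g : X → Cl d, MemLp (fun x => ℓ (g x)) 2 μ →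
        ∃ f : X → Cl d, MemLp (fun x => ℓ (f x)) 2 μ ∧
          MemLp (fun x => ℓ (h x * f x)) 2 μ ∧
          (fun x => h x * f x) =ᵐ[μ] g) ↔
      ∃ ε : ℝ, 0 < ε ∧ ∀ᵐ x ∂μ, ε ≤ ‖ℓ (h x)‖) := by
  have hne0_of : ∀ x : X, ℓ (h x) ≠ 0 → h x ≠ 0 := fun x hx h0 => by
    rw [h0, map_zero] at hx; exact hx rfl
  refine ⟨⟨?_, ?_⟩, ?_, ?_, ?_⟩
  · -- injective → a.e. nonzero
    intro H
    by_contra hne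
    have hne' : ¬ ∀ᵐ x ∂μ, ℓ (h x) ≠ 0 := fun hc => hne (by
      filter_upwards [hc] with x hx using hne0_of x hx)
    obtain ⟨T, hTm, hTpos, hTfin, hT0⟩ := exists_null_core μ hmeas hne'
    set f : X → Cl d := T.indicator (fun _ => (1 : Cl d)) with hfdef
    have hlf : (fun x => ℓ (f x)) = T.indicator (fun _ => ℓ (1 : Cl d)) := by
      funext x
      by_cases hx : x ∈ T <;>
        simp [hfdef, Set.indicator_of_mem, Set.indicator_of_notMem, hx]
    have hfmem : MemLp (fun x => ℓ (f x)) 2 μ := by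
      rw [hlf]; exact memLp_indicator_const 2 hTm _ (Or.inr hTfin.ne)
    have hzero : (fun x => h x * f x) =ᵐ[μ] 0 := by
      filter_upwards [hT0] with x hx
      by_cases hxT : x ∈ T
      · have : h x = 0 := ℓ.map_eq_zero_iff.mp (hx hxT)
        simp [this]
      · simp [hfdef, Set.indicator_of_notMem, hxT]
    have hhfmem : MemLp (fun x => ℓ (h x * f x)) 2 μ := by
      refine (MeasureTheory.MemLp.zero).ae_eq ?_
      filter_upwards [hzero] with x hx
      have : h x * f x = 0 := hx
      simp [this]
    have hf0 := H f hfmem hhfmem hzero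
    have : μ T = 0 := by
      refine measure_mono_null (fun x hx => ?_) (ae_iff.mp hf0)
      have : f x = 1 := by simp [hfdef, Set.indicator_of_mem, hx]
      simp [this]
    exact hTpos.ne' this
  · -- a.e. nonzero → injective
    intro hae f _ _ h0
    filter_upwards [hae, h0] with x hx hfx
    have hfx' : h x * f x = 0 := by simpa using hfx
    have heq1 : f x = hInv ℓ h x * (h x * f x) := by
      rw [← mul_assoc, hInv_mul_self ℓ h hN x hx, one_mul]
    simp only [Pi.zero_apply]
    rw [heq1, hfx', mul_zero]
  · -- inverse formula
    intro hae
    constructor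
    · intro f _ _
      filter_upwards [hae] with x hx
      rw [← mul_assoc, hInv_mul_self ℓ h hN x hx, one_mul]
    · intro g _ _
      filter_upwards [hae] with x hx
      rw [← mul_assoc, self_mul_hInv ℓ h hN x hx, one_mul]
  · -- surjective → ∃ ε
    intro Hsurj
    by_contra hc
    push_neg at hc
    -- Step A : h ≠ 0 a.e.
    have hne0 : ∀ᵐ x ∂μ, h x ≠ 0 := by
      by_contra hne
      have hne' : ¬ ∀ᵐ x ∂μ, ℓ (h x) ≠ 0 := fun hcc => hne (by
        filter_upwards [hcc] with x hx using hne0_of x hx)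
      obtain ⟨T, hTm, hTpos, hTfin, hT0⟩ := exists_null_core μ hmeas hne'
      obtain ⟨f, _, _, hfg⟩ := Hsurj (T.indicator fun _ => (1 : Cl d)) (by
        have hlf : (fun x => ℓ (T.indicator (fun _ => (1 : Cl d)) x)) =
            T.indicator (fun _ => ℓ (1 : Cl d)) := by
          funext x
          by_cases hx : x ∈ T <;>
            simp [Set.indicator_of_mem, Set.indicator_of_notMem, hx]
        rw [hlf]; exact memLp_indicator_const 2 hTm _ (Or.inr hTfin.ne))
      have hbad : ∀ᵐ x ∂μ, x ∉ T := by
        filter_upwards [hfg, hT0] with x h1 h2 hxT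
        have hz : h x = 0 := ℓ.map_eq_zero_iff.mp (h2 hxT)
        have h3 : h x * f x = 1 := by
          have := h1
          simp only [Set.indicator_of_mem hxT] at this
          exact this
        rw [hz, zero_mul] at h3
        exact one_ne_zero h3.symm
      exact hTpos.ne' (measure_mono_null (fun x hx => not_not_intro hx) (ae_iff.mp hbad))
    -- measurable representative
    obtain ⟨φ, hφdef⟩ : ∃ φ' : X → EuclideanSpace ℝ (Fin (2 ^ d)),
        φ' = hmeas.mk _ := ⟨_, rfl⟩
    have hφeq : (fun x => ℓ (h x)) =ᵐ[μ] φ := hφdef ▸ hmeas.ae_eq_mk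
    have hφm : Measurable φ := hφdef ▸ hmeas.stronglyMeasurable_mk.measurable
    obtain ⟨ψ, hψdef⟩ : ∃ ψ' : X → ℝ, ψ' = fun x => ‖φ x‖ := ⟨_, rfl⟩
    have hψx : ∀ x, ψ x = ‖φ x‖ := fun x => by rw [hψdef]
    have hψm : Measurable ψ := by rw [hψdef]; exact hφm.norm
    -- dyadic shells
    obtain ⟨S, hSdef⟩ : ∃ S' : ℕ → Set X,
        S' = fun k => ψ ⁻¹' Set.Ico (((1 : ℝ)/2) ^ (k+1)) (((1 : ℝ)/2) ^ k) := ⟨_, rfl⟩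
    have hSm : ∀ k, MeasurableSet (S k) := fun k => by
      rw [hSdef]; exact hψm measurableSet_Ico
    have hSmem : ∀ k x, x ∈ S k ↔
        ((1 : ℝ)/2) ^ (k+1) ≤ ψ x ∧ ψ x < ((1 : ℝ)/2) ^ k := fun k x => by
      rw [hSdef]; exact Iff.rfl
    have hSdisj : ∀ a b : ℕ, a < b → ∀ x, x ∈ S a → x ∈ S b → False := by
      intro a b hab x hxa hxb
      have h1 : ψ x < ((1 : ℝ)/2) ^ b := ((hSmem b x).mp hxb).2
      have h2 : ((1 : ℝ)/2) ^ b ≤ ((1 : ℝ)/2) ^ (a+1) :=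
        pow_le_pow_of_le_one (by norm_num) (by norm_num) hab
      exact absurd ((hSmem a x).mp hxa).1 (by linarith)
    have hψpos : ∀ᵐ x ∂μ, 0 < ψ x := by
      filter_upwards [hne0, hφeq] with x hx h2
      have : φ x ≠ 0 := by rw [← h2]; exact ℓ.map_ne_zero_iff.mpr hx
      rw [hψx x]
      exact norm_pos_iff.mpr this
    -- infinitely many nonnull shells
    have hinf : {k | μ (S k) ≠ 0}.Infinite := by
      by_contra hfin
      rw [Set.not_infinite] at hfin
      obtain ⟨K, hK⟩ := hfin.bddAbove
      have hnull : ∀ k, K < k → μ (S k) = 0 := fun k hk => by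
        by_contra h0; exact absurd (hK h0) (not_le.mpr hk)
      have hae : ∀ᵐ x ∂μ, ∀ k, K < k → x ∉ S k := by
        rw [ae_all_iff]
        intro k
        by_cases hk : K < k
        · filter_upwards [measure_eq_zero_iff_ae_notMem.mp (hnull k hk)] with x hx _
          exact hx
        · filter_upwards with x hk'; exact absurd hk' hk
      have hgood : ∀ᵐ x ∂μ, ((1 : ℝ)/2) ^ (K+1) ≤ ‖ℓ (h x)‖ := by
        filter_upwards [hae, hψpos, hφeq] with x h1 h2 h3
        rw [h3, ← hψx x]
        by_contra hlt
        push_neg at hlt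
        obtain ⟨n, hn⟩ := exists_pow_lt_of_lt_one h2 (by norm_num : (1:ℝ)/2 < 1)
        have hq : ∃ m, ((1 : ℝ)/2) ^ (m+1) ≤ ψ x :=
          ⟨n, le_of_lt (lt_of_le_of_lt
            (pow_le_pow_of_le_one (by norm_num) (by norm_num) (Nat.le_succ n)) hn)⟩
        set k := Nat.find hq with hkdef
        have hk1 : ((1 : ℝ)/2) ^ (k+1) ≤ ψ x := Nat.find_spec hq
        have hk2 : ψ x < ((1 : ℝ)/2) ^ k := by
          rcases Nat.eq_zero_or_pos k with hk0 | hk0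
          · rw [hk0, pow_zero]
            calc ψ x < ((1 : ℝ)/2) ^ (K+1) := hlt
              _ ≤ 1 := pow_le_one₀ (by norm_num) (by norm_num)
          · obtain ⟨m, hm⟩ := Nat.exists_eq_succ_of_ne_zero hk0.ne'
            have hmlt : m < k := by omega
            have := Nat.find_min hq hmlt
            push_neg at this
            rw [hm]
            exact this
        have hkK : K < k := by
          have hlt2 : ((1 : ℝ)/2) ^ (k+1) < ((1 : ℝ)/2) ^ (K+1) := lt_of_le_of_lt hk1 hlt
          have := (pow_lt_pow_iff_right_of_lt_one₀ (by norm_num : (0:ℝ) < 1/2)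
            (by norm_num : (1:ℝ)/2 < 1)).mp hlt2
          omega
        exact h1 k hkK ((hSmem k x).mpr ⟨hk1, hk2⟩)
      exact hc (((1 : ℝ)/2) ^ (K+1)) (by positivity) (hgood.mono fun x hx => not_lt.mpr hx)
    -- choose subsets of finite positive measure in an increasing sequence of shells
    obtain ⟨k, hkdef⟩ : ∃ k' : ℕ → ℕ, k' = Nat.nth (fun k => μ (S k) ≠ 0) := ⟨_, rfl⟩
    have hkmem : ∀ j, μ (S (k j)) ≠ 0 := fun j => by
      rw [hkdef]; exact Nat.nth_mem_of_infinite hinf j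
    have hkmono : StrictMono k := by rw [hkdef]; exact Nat.nth_strictMono hinf
    have hkge : ∀ j, j ≤ k j := fun j => hkmono.le_apply
    have hchoice : ∀ j : ℕ, ∃ t, MeasurableSet t ∧ t ⊆ S (k j) ∧ 0 < μ t ∧ μ t < ⊤ :=
      fun j => MeasureTheory.Measure.exists_subset_measure_lt_top (hSm (k j))
        (pos_iff_ne_zero.mpr (hkmem j))
    choose E hEm hEsub hEpos hEfin using hchoice
    have hEdisj : ∀ i j : ℕ, i ≠ j → ∀ x, x ∈ E i → x ∈ E j → False := by
      intro i j hij x hxi hxj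
      rcases lt_or_gt_of_ne (fun hh => hij (hkmono.injective hh) : k i ≠ k j) with hlt | hlt
      · exact hSdisj _ _ hlt x (hEsub i hxi) (hEsub j hxj)
      · exact hSdisj _ _ hlt x (hEsub j hxj) (hEsub i hxi)
    -- weights
    obtain ⟨a, hadef⟩ : ∃ a : ℕ → ℝ, a = fun j => ((1:ℝ)/2) ^ (k j) /
        Real.sqrt ((μ (E j)).toReal * (j+1)) := ⟨_, rfl⟩
    have hμpos : ∀ j, 0 < (μ (E j)).toReal :=
      fun j => ENNReal.toReal_pos (hEpos j).ne' (hEfin j).ne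
    have hapos : ∀ j, 0 < a j := fun j => by
      rw [hadef]
      exact div_pos (by positivity)
        (Real.sqrt_pos.mpr (mul_pos (hμpos j) (by positivity)))
    have h14 : ∀ m : ℕ, (((1:ℝ)/2) ^ m) ^ 2 = ((1:ℝ)/4) ^ m := fun m => by
      rw [pow_right_comm]
      norm_num
    have ha2 : ∀ j, a j ^ 2 * (μ (E j)).toReal = ((1:ℝ)/4) ^ (k j) / (j+1) := by
      intro j
      have hs : Real.sqrt ((μ (E j)).toReal * (j+1)) ^ 2 = (μ (E j)).toReal * (j+1) :=
        Real.sq_sqrt (by positivity)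
      have ha : a j ^ 2 = ((1:ℝ)/4) ^ (k j) / ((μ (E j)).toReal * (j+1)) := by
        rw [hadef]
        simp only []
        rw [div_pow, hs, h14]
      rw [ha]
      have ht : (μ (E j)).toReal ≠ 0 := (hμpos j).ne'
      have hj : ((j:ℝ)+1) ≠ 0 := by positivity
      field_simp
    -- the function g₀
    obtain ⟨u, hudef⟩ : ∃ u : X → ℝ≥0∞,
        u = fun x => ∑' j, (E j).indicator (fun _ => ENNReal.ofReal (a j)) x := ⟨_, rfl⟩
    have hum : Measurable u := by
      rw [hudef]
      exact Measurable.ennreal_tsum (fun j => measurable_const.indicator (hEm j))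
    obtain ⟨r, hrdef⟩ : ∃ r : X → ℝ, r = fun x => (u x).toReal := ⟨_, rfl⟩
    have hrm : Measurable r := by rw [hrdef]; exact hum.ennreal_toReal
    have hu_mem : ∀ j x, x ∈ E j → u x = ENNReal.ofReal (a j) := by
      intro j x hx
      rw [hudef]
      simp only []
      rw [tsum_eq_single j (fun i hij => Set.indicator_of_notMem
        (fun hxi => hEdisj i j hij x hxi hx) _), Set.indicator_of_mem hx]
    have hu_nmem : ∀ x, (∀ j, x ∉ E j) → u x = 0 := by
      intro x hx
      rw [hudef]
      simp only []
      have : ∀ j : ℕ, (E j).indicator (fun _ => ENNReal.ofReal (a j)) x = 0 :=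
        fun j => Set.indicator_of_notMem (hx j) _
      simp only [this, tsum_zero]
    have hr_mem : ∀ j x, x ∈ E j → r x = a j := fun j x hx => by
      rw [hrdef]
      simp only []
      rw [hu_mem j x hx, ENNReal.toReal_ofReal (hapos j).le]
    have hr_nmem : ∀ x, (∀ j, x ∉ E j) → r x = 0 := fun x hx => by
      rw [hrdef]
      simp only []
      rw [hu_nmem x hx, ENNReal.toReal_zero]
    obtain ⟨g₀, hg₀def⟩ : ∃ g₀ : X → Cl d, g₀ = fun x => r x • (1 : Cl d) := ⟨_, rfl⟩
    have henorm : ∀ v : EuclideanSpace ℝ (Fin (2^d)),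
        (↑‖v‖₊ : ℝ≥0∞) ^ (2:ℝ) = ENNReal.ofReal (‖v‖^2) := fun v => by
      rw [← enorm_eq_nnnorm, ← ofReal_norm,
        ENNReal.ofReal_rpow_of_nonneg (norm_nonneg _) (by norm_num), Real.rpow_two]
    have hg₀asm : AEStronglyMeasurable (fun x => ℓ (g₀ x)) μ := by
      have hrepr : (fun x => ℓ (g₀ x)) = fun x => r x • ℓ (1 : Cl d) := by
        funext x
        simp only [hg₀def]
        exact _root_.map_smul ℓ _ _
      rw [hrepr]
      exact (continuous_id.smul continuous_const).comp_aestronglyMeasurable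
        hrm.aestronglyMeasurable
    have hg₀mem : MemLp (fun x => ℓ (g₀ x)) 2 μ := by
      refine ⟨hg₀asm, ?_⟩
      rw [eLpNorm_eq_lintegral_rpow_enorm_toReal two_ne_zero ENNReal.ofNat_ne_top]
      simp only [ENNReal.toReal_ofNat]
      refine ENNReal.rpow_lt_top_of_nonneg (by norm_num) ?_
      have hle : ∀ x, (↑‖ℓ (g₀ x)‖₊ : ℝ≥0∞) ^ (2:ℝ) ≤
          ∑' j, (E j).indicator
            (fun _ => ENNReal.ofReal ((a j * ‖ℓ (1 : Cl d)‖)^2)) x := by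
        intro x
        by_cases hx : ∃ j, x ∈ E j
        · obtain ⟨j, hxj⟩ := hx
          have h1 : ‖ℓ (g₀ x)‖ = a j * ‖ℓ (1 : Cl d)‖ := by
            simp only [hg₀def]
            rw [_root_.map_smul, norm_smul, Real.norm_eq_abs, hr_mem j x hxj,
              abs_of_nonneg (hapos j).le]
          rw [henorm, h1, tsum_eq_single j (fun i hij => Set.indicator_of_notMem
            (fun hxi => hEdisj i j hij x hxi hxj) _), Set.indicator_of_mem hxj]
        · push_neg at hx
          have h0 : ℓ (g₀ x) = 0 := by
            simp only [hg₀def]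
            rw [hr_nmem x hx, zero_smul, map_zero]
          rw [henorm, h0]
          simp only [norm_zero]
          norm_num
      have hint : ∫⁻ x, (↑‖ℓ (g₀ x)‖₊ : ℝ≥0∞) ^ (2:ℝ) ∂μ ≤
          ∑' j, ENNReal.ofReal ((a j * ‖ℓ (1 : Cl d)‖)^2) * μ (E j) := by
        refine le_trans (lintegral_mono hle) ?_
        rw [lintegral_tsum (fun j => (measurable_const.indicator (hEm j)).aemeasurable)]
        exact le_of_eq (tsum_congr fun j => lintegral_indicator_const (hEm j) _)
      have hterm : ∀ j, ENNReal.ofReal ((a j * ‖ℓ (1 : Cl d)‖)^2) * μ (E j) ≤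
          ENNReal.ofReal (‖ℓ (1 : Cl d)‖^2) * ENNReal.ofReal ((1:ℝ)/4) ^ j := by
        intro j
        rw [← ENNReal.ofReal_toReal (hEfin j).ne, ← ENNReal.ofReal_mul (by positivity),
          ← ENNReal.ofReal_pow (by norm_num), ← ENNReal.ofReal_mul (by positivity)]
        refine ENNReal.ofReal_le_ofReal ?_
        have he : (a j * ‖ℓ (1 : Cl d)‖)^2 * (μ (E j)).toReal
            = ‖ℓ (1 : Cl d)‖^2 * (((1:ℝ)/4) ^ (k j) / (j+1)) := by
          rw [← ha2 j]; ring
        rw [he]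
        have h1 : ((1:ℝ)/4) ^ (k j) / (j+1) ≤ ((1:ℝ)/4) ^ j := by
          calc ((1:ℝ)/4) ^ (k j) / (j+1) ≤ ((1:ℝ)/4) ^ (k j) := by
                apply div_le_self (by positivity)
                have : (0:ℝ) ≤ (j:ℝ) := Nat.cast_nonneg j
                linarith
            _ ≤ ((1:ℝ)/4) ^ j :=
                pow_le_pow_of_le_one (by norm_num) (by norm_num) (hkge j)
        exact mul_le_mul_of_nonneg_left h1 (by positivity)
      have hgeom : (∑' j : ℕ, ENNReal.ofReal (‖ℓ (1 : Cl d)‖^2)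
          * ENNReal.ofReal ((1:ℝ)/4) ^ j) < ⊤ := by
        rw [ENNReal.tsum_mul_left, ENNReal.tsum_geometric]
        refine ENNReal.mul_lt_top ENNReal.ofReal_lt_top ?_
        rw [ENNReal.inv_lt_top, tsub_pos_iff_lt]
        exact ENNReal.ofReal_lt_one.mpr (by norm_num)
      exact (lt_of_le_of_lt (hint.trans (ENNReal.tsum_le_tsum hterm)) hgeom).ne
    -- apply surjectivity
    obtain ⟨f, hfmem, -, hfg⟩ := Hsurj g₀ hg₀mem
    obtain ⟨b, hbdef⟩ : ∃ b : ℕ → ℝ,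
        b = fun j => a j / (((1:ℝ)/2) ^ (k j) * ‖conjCLM ℓ‖) := ⟨_, rfl⟩
    have hC := conjCLM_norm_pos ℓ
    have hbpos : ∀ j, 0 < b j := fun j => by
      rw [hbdef]
      exact div_pos (hapos j) (by positivity)
    have hkey : ∀ᵐ x ∂μ, ∀ j, x ∈ E j → b j ≤ ‖ℓ (f x)‖ := by
      filter_upwards [hfg, hne0, hφeq] with x h1 h2 h3
      intro j hxj
      have hnx : ‖ℓ (h x)‖ = ψ x := by rw [hψx x, h3]
      have hxS := hEsub j hxj
      have hlt : ‖ℓ (h x)‖ < ((1:ℝ)/2) ^ (k j) := by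
        rw [hnx]; exact ((hSmem (k j) x).mp hxS).2
      have hpos : 0 < ‖ℓ (h x)‖ := norm_pos_iff.mpr (ℓ.map_ne_zero_iff.mpr h2)
      have hfx : f x = a j • hInv ℓ h x := by
        have e1 : f x = hInv ℓ h x * (h x * f x) := by
          rw [← mul_assoc, hInv_mul_self ℓ h hN x h2, one_mul]
        have e2 : h x * f x = g₀ x := h1
        rw [e1, e2]
        simp only [hg₀def]
        rw [hr_mem j x hxj, mul_smul_comm, mul_one]
      have hnf : ‖ℓ (f x)‖ = a j * ‖ℓ (hInv ℓ h x)‖ := by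
        rw [hfx, _root_.map_smul, norm_smul, Real.norm_eq_abs, abs_of_pos (hapos j)]
      have hninv : ‖ℓ (hInv ℓ h x)‖ = (‖ℓ (h x)‖^2)⁻¹ * ‖ℓ (clConj (h x))‖ := by
        show ‖ℓ ((‖ℓ (h x)‖ ^ 2)⁻¹ • clConj (h x))‖ = _
        rw [_root_.map_smul, norm_smul, Real.norm_eq_abs, abs_of_nonneg (by positivity)]
      have hconj : ‖ℓ (h x)‖ / ‖conjCLM ℓ‖ ≤ ‖ℓ (clConj (h x))‖ := by
        rw [div_le_iff₀ hC]
        exact (norm_conj_lower ℓ (h x)).trans (le_of_eq (mul_comm _ _))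
      have hstep : (1:ℝ) / (((1:ℝ)/2)^(k j) * ‖conjCLM ℓ‖) ≤
          (‖ℓ (h x)‖^2)⁻¹ * ‖ℓ (clConj (h x))‖ := by
        calc (1:ℝ) / (((1:ℝ)/2)^(k j) * ‖conjCLM ℓ‖)
            ≤ 1 / (‖ℓ (h x)‖ * ‖conjCLM ℓ‖) := by
              apply one_div_le_one_div_of_le (by positivity)
              exact mul_le_mul_of_nonneg_right hlt.le hC.le
          _ = (‖ℓ (h x)‖^2)⁻¹ * (‖ℓ (h x)‖ / ‖conjCLM ℓ‖) := by
              field_simp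
          _ ≤ (‖ℓ (h x)‖^2)⁻¹ * ‖ℓ (clConj (h x))‖ :=
              mul_le_mul_of_nonneg_left hconj (by positivity)
      rw [hnf, hninv, hbdef]
      simp only []
      calc a j / (((1:ℝ)/2)^(k j) * ‖conjCLM ℓ‖)
          = a j * ((1:ℝ) / (((1:ℝ)/2)^(k j) * ‖conjCLM ℓ‖)) := by ring
        _ ≤ a j * ((‖ℓ (h x)‖^2)⁻¹ * ‖ℓ (clConj (h x))‖) :=
            mul_le_mul_of_nonneg_left hstep (hapos j).le
    -- divergence of the L² norm of f
    have hlow : ∀ᵐ x ∂μ,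
        (∑' j, (E j).indicator (fun _ => ENNReal.ofReal (b j ^ 2)) x)
          ≤ (↑‖ℓ (f x)‖₊ : ℝ≥0∞) ^ (2:ℝ) := by
      filter_upwards [hkey] with x hx
      by_cases hxE : ∃ j, x ∈ E j
      · obtain ⟨j, hxj⟩ := hxE
        rw [tsum_eq_single j (fun i hij => Set.indicator_of_notMem
          (fun hxi => hEdisj i j hij x hxi hxj) _), Set.indicator_of_mem hxj, henorm]
        refine ENNReal.ofReal_le_ofReal ?_
        have := hx j hxj
        nlinarith [hbpos j, norm_nonneg (ℓ (f x))]
      · push_neg at hxE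
        have hz : ∀ j : ℕ, (E j).indicator (fun _ => ENNReal.ofReal (b j ^ 2)) x = 0 :=
          fun j => Set.indicator_of_notMem (hxE j) _
        simp only [hz, tsum_zero]
        exact zero_le
    have hdiv : ∫⁻ x, (↑‖ℓ (f x)‖₊ : ℝ≥0∞) ^ (2:ℝ) ∂μ = ⊤ := by
      have h1 : ∫⁻ x, (∑' j, (E j).indicator (fun _ => ENNReal.ofReal (b j ^ 2)) x) ∂μ
          = ∑' j, ENNReal.ofReal (b j ^ 2) * μ (E j) := by
        rw [lintegral_tsum (fun j => (measurable_const.indicator (hEm j)).aemeasurable)]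
        exact tsum_congr fun j => lintegral_indicator_const (hEm j) _
      have h2 : ∀ j, ENNReal.ofReal (b j ^ 2) * μ (E j)
          = ENNReal.ofReal ((1:ℝ) / ((j+1) * ‖conjCLM ℓ‖^2)) := by
        intro j
        rw [← ENNReal.ofReal_toReal (hEfin j).ne, ← ENNReal.ofReal_mul (by positivity)]
        congr 1
        rw [hbdef]
        simp only []
        have expand : (a j / (((1:ℝ)/2)^(k j) * ‖conjCLM ℓ‖)) ^ 2 * (μ (E j)).toReal
            = (a j ^ 2 * (μ (E j)).toReal) / ((((1:ℝ)/2)^(k j))^2 * ‖conjCLM ℓ‖^2) := by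
          ring
        rw [expand, ha2 j, h14 (k j)]
        have hq : ((1:ℝ)/4) ^ (k j) ≠ 0 := by positivity
        have hj : ((j:ℝ)+1) ≠ 0 := by positivity
        have hCn : ‖conjCLM ℓ‖ ≠ 0 := hC.ne'
        field_simp
      have h3 : (∑' j : ℕ, ENNReal.ofReal ((1:ℝ) / ((j+1) * ‖conjCLM ℓ‖^2))) = ⊤ := by
        by_contra h4
        have h5 : Summable (fun j : ℕ =>
            (((1:ℝ) / ((j+1) * ‖conjCLM ℓ‖^2)).toNNReal)) := by
          refine ENNReal.tsum_coe_ne_top_iff_summable.mp ?_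
          exact h4
        have h6 : Summable (fun j : ℕ => (1:ℝ) / ((j+1) * ‖conjCLM ℓ‖^2)) := by
          have := NNReal.summable_coe.mpr h5
          refine this.congr fun j => ?_
          exact Real.coe_toNNReal _ (by positivity)
        have h7 : Summable (fun j : ℕ => (1:ℝ) / (j+1)) := by
          have h8 := h6.mul_left (‖conjCLM ℓ‖^2)
          refine h8.congr fun j => ?_
          have hCn : ‖conjCLM ℓ‖ ≠ 0 := hC.ne'
          have hj : ((j:ℝ)+1) ≠ 0 := by positivity
          field_simp
        have h9 : Summable (fun n : ℕ => (1:ℝ) / n) := by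
          refine (summable_nat_add_iff 1).mp ?_
          refine h7.congr fun j => ?_
          push_cast
          ring
        exact Real.not_summable_one_div_natCast h9
      have h10 := lintegral_mono_ae hlow
      rw [h1, tsum_congr h2, h3] at h10
      exact top_le_iff.mp h10
    have hfin2 := hfmem.2
    rw [eLpNorm_eq_lintegral_rpow_enorm_toReal two_ne_zero ENNReal.ofNat_ne_top] at hfin2
    simp only [ENNReal.toReal_ofNat, enorm_eq_nnnorm] at hfin2
    rw [hdiv, ENNReal.top_rpow_of_pos (by norm_num)] at hfin2
    exact lt_irrefl _ hfin2
  · -- ∃ ε → surjective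
    rintro ⟨ε, hε, hεa⟩ g hg
    have hhe : ∀ᵐ x ∂μ, h x ≠ 0 := by
      filter_upwards [hεa] with x hx
      refine hne0_of x (fun h0 => ?_)
      rw [h0] at hx; simp at hx; linarith
    have heq : ∀ᵐ x ∂μ, h x * (hInv ℓ h x * g x) = g x := by
      filter_upwards [hhe] with x hx
      rw [← mul_assoc, self_mul_hInv ℓ h hN x hx, one_mul]
    refine ⟨fun x => hInv ℓ h x * g x, ?_, ?_, heq⟩
    · -- MemLp of ℓ ∘ f
      obtain ⟨w, hwdef⟩ : ∃ w : X → EuclideanSpace ℝ (Fin (2 ^ d)),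
          w = fun x => (‖ℓ (h x)‖ ^ 2)⁻¹ • conjCLM ℓ (ℓ (h x)) := ⟨_, rfl⟩
      have hw : ∀ x, ℓ (hInv ℓ h x) = w x := fun x => by
        show ℓ ((‖ℓ (h x)‖ ^ 2)⁻¹ • clConj (h x)) = w x
        simp only [hwdef]
        rw [_root_.map_smul, conjCLM_apply]
      have hwm : AEStronglyMeasurable w μ := by
        have h1 : AEMeasurable (fun x => (‖ℓ (h x)‖ ^ 2)⁻¹) μ :=
          ((hmeas.norm.aemeasurable).pow_const 2).inv
        rw [hwdef]
        exact h1.aestronglyMeasurable.smul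
          ((conjCLM ℓ).continuous.comp_aestronglyMeasurable hmeas)
      have hrepr : (fun x => ℓ (hInv ℓ h x * g x)) =
          fun x => mulCLM ℓ (w x) (ℓ (g x)) := by
        funext x
        rw [← hw, mulCLM_apply]
      have hasm : AEStronglyMeasurable (fun x => ℓ (hInv ℓ h x * g x)) μ := by
        rw [hrepr]
        exact ((mulCLM ℓ).isBoundedBilinearMap.continuous).comp_aestronglyMeasurable
          (hwm.prodMk hg.1)
      refine MemLp.of_le_mul hg hasm
        (c := ‖mulCLM ℓ‖ * (‖conjCLM ℓ‖ / ε)) ?_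
      filter_upwards [hεa] with x hx
      have hxpos : 0 < ‖ℓ (h x)‖ := lt_of_lt_of_le hε hx
      have hb : ‖w x‖ ≤ ‖conjCLM ℓ‖ / ε := by
        have h1 : ‖w x‖ = (‖ℓ (h x)‖ ^ 2)⁻¹ * ‖conjCLM ℓ (ℓ (h x))‖ := by
          simp only [hwdef]
          rw [norm_smul, Real.norm_eq_abs, abs_of_nonneg (by positivity)]
        rw [h1]
        calc (‖ℓ (h x)‖ ^ 2)⁻¹ * ‖conjCLM ℓ (ℓ (h x))‖
            ≤ (‖ℓ (h x)‖ ^ 2)⁻¹ * (‖conjCLM ℓ‖ * ‖ℓ (h x)‖) := by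
              gcongr
              exact (conjCLM ℓ).le_opNorm _
          _ = ‖conjCLM ℓ‖ / ‖ℓ (h x)‖ := by field_simp
          _ ≤ ‖conjCLM ℓ‖ / ε := by gcongr
      calc ‖ℓ (hInv ℓ h x * g x)‖ = ‖mulCLM ℓ (w x) (ℓ (g x))‖ := by rw [← hw, mulCLM_apply]
        _ ≤ ‖mulCLM ℓ‖ * ‖w x‖ * ‖ℓ (g x)‖ := (mulCLM ℓ).le_opNorm₂ _ _
        _ ≤ ‖mulCLM ℓ‖ * (‖conjCLM ℓ‖ / ε) * ‖ℓ (g x)‖ := by gcongr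
    · -- MemLp of ℓ ∘ (h * f)
      refine hg.ae_eq ?_
      filter_upwards [heq] with x hx
      exact congrArg ℓ hx.symm
end
end

section
/- Let X be a measure space, h : X → ℝ^{d+1} measurable (paravector valued), and s a paravector. Then the operator Q_s[M_h] = M_h² - 2 s_0 M_h + |s|² (with domain dom(M_h²)) equals the multiplication operator M_{h² - 2 s_0 h + |s|²}, including equality of domains. -/
noncomputable section

open scoped BigOperators

open MeasureTheory

/-- for a paravector-valued `h : X → ℝ^{d+1}` (given by its real
part `h₀` and vector part `hv`) and a paravector `s = (s₀, sv)`, the operator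
`Q_s[M_h] = M_h² - 2s₀M_h + |s|²` with domain `dom(M_h²)` equals the
multiplication operator `M_{h² - 2s₀h + |s|²}`, including equality of domains.
The norm on ℝ_d is the Euclidean norm transported via `ℓ`, with `|pv| = (modulus
of the paravector)` and `|pv·a| = |pv||a|`. -/
theorem qs_of_multiplication_operator {d : ℕ}
    {X : Type*} [MeasurableSpace X] (μ : Measure X)
    (ℓ : Cl d ≃ₗ[ℝ] EuclideanSpace ℝ (Fin (2 ^ d)))
    (hnorm : ∀ (t₀ : ℝ) (tv : Fin d → ℝ), ‖ℓ (pv t₀ tv)‖ ^ 2 = pvNormSq t₀ tv)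
    (hparamul : ∀ (t₀ : ℝ) (tv : Fin d → ℝ) (a : Cl d),
      ‖ℓ (pv t₀ tv * a)‖ = ‖ℓ (pv t₀ tv)‖ * ‖ℓ a‖)
    (h₀ : X → ℝ) (hv : X → Fin d → ℝ)
    (hmeas : AEStronglyMeasurable (fun x => ℓ (pv (h₀ x) (hv x))) μ)
    (s₀ : ℝ) (sv : Fin d → ℝ) :
    -- the function `h` and the multiplier `g = h² - 2s₀h + |s|²`:
    (∀ f : X → Cl d,
      ((MemLp (fun x => ℓ (f x)) 2 μ ∧
        MemLp (fun x => ℓ (pv (h₀ x) (hv x) * f x)) 2 μ ∧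
        MemLp (fun x => ℓ (pv (h₀ x) (hv x) * (pv (h₀ x) (hv x) * f x))) 2 μ) ↔
       (MemLp (fun x => ℓ (f x)) 2 μ ∧
        MemLp (fun x => ℓ ((pv (h₀ x) (hv x) * pv (h₀ x) (hv x)
          - (2 * s₀) • pv (h₀ x) (hv x)
          + pvNormSq s₀ sv • (1 : Cl d)) * f x)) 2 μ))) ∧
    -- equality of the actions:
    (∀ (f : X → Cl d) (x : X),
      pv (h₀ x) (hv x) * (pv (h₀ x) (hv x) * f x)
        - (2 * s₀) • (pv (h₀ x) (hv x) * f x) + pvNormSq s₀ sv • f x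
      = (pv (h₀ x) (hv x) * pv (h₀ x) (hv x) - (2 * s₀) • pv (h₀ x) (hv x)
          + pvNormSq s₀ sv • (1 : Cl d)) * f x) := by
  classical
  have hid : ∀ (f : X → Cl d) (x : X),
      pv (h₀ x) (hv x) * (pv (h₀ x) (hv x) * f x)
        - (2 * s₀) • (pv (h₀ x) (hv x) * f x) + pvNormSq s₀ sv • f x
      = (pv (h₀ x) (hv x) * pv (h₀ x) (hv x) - (2 * s₀) • pv (h₀ x) (hv x)
          + pvNormSq s₀ sv • (1 : Cl d)) * f x := by
    intro f x
    simp [sub_mul, add_mul, smul_mul_assoc, mul_assoc]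
  refine ⟨?_, hid⟩
  intro f
  set m2 : ℝ := pvNormSq s₀ sv with hm2
  have m2nn : 0 ≤ m2 := by
    rw [hm2, pvNormSq]
    positivity
  constructor
  · rintro ⟨hf, hqf, hqqf⟩
    refine ⟨hf, ?_⟩
    have heq : (fun x => ℓ ((pv (h₀ x) (hv x) * pv (h₀ x) (hv x)
          - (2 * s₀) • pv (h₀ x) (hv x) + m2 • (1 : Cl d)) * f x))
        = fun x => (ℓ (pv (h₀ x) (hv x) * (pv (h₀ x) (hv x) * f x))
            - (2 * s₀) • ℓ (pv (h₀ x) (hv x) * f x)) + m2 • ℓ (f x) := by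
      funext x
      rw [← hid f x, map_add, map_sub, ℓ.map_smul, ℓ.map_smul]
    rw [heq]
    have h3 := (hqqf.sub (hqf.const_smul (2 * s₀))).add (hf.const_smul m2)
    convert h3 using 1
    · rfl
    · rfl
  · rintro ⟨hf, hgf⟩
    -- notation
    set q : X → Cl d := fun x => pv (h₀ x) (hv x) with hq
    -- multiplication as a continuous bilinear map through ℓ
    let Bl : EuclideanSpace ℝ (Fin (2 ^ d)) →ₗ[ℝ] EuclideanSpace ℝ (Fin (2 ^ d))
        →ₗ[ℝ] EuclideanSpace ℝ (Fin (2 ^ d)) :=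
      LinearMap.mk₂ ℝ (fun a b => ℓ (ℓ.symm a * ℓ.symm b))
        (fun a a' b => by simp [add_mul]) (fun c a b => by simp [smul_mul_assoc])
        (fun a b b' => by simp [mul_add]) (fun c a b => by simp [mul_smul_comm])
    let Bc : EuclideanSpace ℝ (Fin (2 ^ d)) →L[ℝ] EuclideanSpace ℝ (Fin (2 ^ d))
        →L[ℝ] EuclideanSpace ℝ (Fin (2 ^ d)) :=
      LinearMap.toContinuousLinearMap
        ((LinearMap.toContinuousLinearMap :
            (EuclideanSpace ℝ (Fin (2 ^ d)) →ₗ[ℝ] EuclideanSpace ℝ (Fin (2 ^ d))) ≃ₗ[ℝ]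
              _ →L[ℝ] _).toLinearMap ∘ₗ Bl)
    have hBc : ∀ a b : Cl d, Bc (ℓ a) (ℓ b) = ℓ (a * b) := by
      intro a b
      simp [Bc, Bl]
    have mqf : AEStronglyMeasurable (fun x => ℓ (q x * f x)) μ := by
      have := Continuous.comp_aestronglyMeasurable₂ (g := fun a b => Bc a b)
        Bc.continuous₂ hmeas hf.aestronglyMeasurable
      exact this.congr (Filter.Eventually.of_forall fun x => hBc _ _)
    have mqqf : AEStronglyMeasurable (fun x => ℓ (q x * (q x * f x))) μ := by
      have := Continuous.comp_aestronglyMeasurable₂ (g := fun a b => Bc a b)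
        Bc.continuous₂ hmeas mqf
      exact this.congr (Filter.Eventually.of_forall fun x => hBc _ _)
    -- pointwise multiplicativity of the norm
    have hNq : ∀ (x : X) (a : Cl d), ‖ℓ (q x * a)‖ = ‖ℓ (q x)‖ * ‖ℓ a‖ :=
      fun x a => hparamul (h₀ x) (hv x) a
    -- abbreviation for the multiplier function
    set g : X → Cl d := fun x =>
      q x * q x - (2 * s₀) • q x + m2 • (1 : Cl d) with hg
    -- key pointwise bound
    have key : ∀ x, ‖ℓ (q x)‖ ^ 2 * ‖ℓ (f x)‖
        ≤ 2 * ‖ℓ (g x * f x)‖ + (4 * s₀ ^ 2 + 2 * m2) * ‖ℓ (f x)‖ := by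
      intro x
      have e : ℓ (q x * (q x * f x))
          = ℓ (g x * f x) + ((2 * s₀) • ℓ (q x * f x) - m2 • ℓ (f x)) := by
        rw [hg, ← hid f x, map_add, map_sub, ℓ.map_smul, ℓ.map_smul]
        abel
      have hb : ‖ℓ (q x * (q x * f x))‖
          ≤ ‖ℓ (g x * f x)‖ + (|2 * s₀| * ‖ℓ (q x * f x)‖ + m2 * ‖ℓ (f x)‖) := by
        rw [e]
        refine (norm_add_le _ _).trans ?_
        gcongr
        refine (norm_sub_le _ _).trans ?_
        rw [norm_smul, norm_smul, Real.norm_eq_abs, Real.norm_eq_abs,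
          abs_of_nonneg m2nn]
      rw [hNq x (q x * f x), hNq x (f x)] at hb
      have hF : (0:ℝ) ≤ ‖ℓ (f x)‖ := norm_nonneg _
      have hG : (0:ℝ) ≤ ‖ℓ (g x * f x)‖ := norm_nonneg _
      nlinarith [sq_nonneg (|2 * s₀| - ‖ℓ (q x)‖), sq_abs (2 * s₀),
        mul_nonneg (sq_nonneg (|2 * s₀| - ‖ℓ (q x)‖)) hF]
    have hFn : MemLp (fun x => ‖ℓ (f x)‖) 2 μ := hf.norm
    have hGn : MemLp (fun x => ‖ℓ (g x * f x)‖) 2 μ := hgf.norm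
    have hqqfmem : MemLp (fun x => ℓ (q x * (q x * f x))) 2 μ := by
      have hdom : MemLp (fun x => 2 * ‖ℓ (g x * f x)‖
          + (4 * s₀ ^ 2 + 2 * m2) * ‖ℓ (f x)‖) 2 μ :=
        (hGn.const_mul 2).add (hFn.const_mul _)
      refine hdom.of_le mqqf ?_
      refine Filter.Eventually.of_forall fun x => ?_
      have h1 : ‖ℓ (q x * (q x * f x))‖ = ‖ℓ (q x)‖ ^ 2 * ‖ℓ (f x)‖ := by
        rw [hNq x (q x * f x), hNq x (f x)]
        ring
      rw [h1]
      exact (key x).trans (le_abs_self _)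
    have hqfmem : MemLp (fun x => ℓ (q x * f x)) 2 μ := by
      have hdom : MemLp (fun x => ‖ℓ (g x * f x)‖
          + (1 / 2 + 2 * s₀ ^ 2 + m2) * ‖ℓ (f x)‖) 2 μ :=
        hGn.add (hFn.const_mul _)
      refine hdom.of_le mqf ?_
      refine Filter.Eventually.of_forall fun x => ?_
      have h1 : ‖ℓ (q x * f x)‖ = ‖ℓ (q x)‖ * ‖ℓ (f x)‖ := hNq x (f x)
      rw [h1]
      refine le_trans ?_ (le_abs_self _)
      have hF : (0:ℝ) ≤ ‖ℓ (f x)‖ := norm_nonneg _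
      nlinarith [key x, sq_nonneg (‖ℓ (q x)‖ - 1),
        mul_nonneg (sq_nonneg (‖ℓ (q x)‖ - 1)) hF]
    exact ⟨hf, hqfmem, hqqfmem⟩
end
end

section
/- Let T be a closed, densely defined right-linear operator on a Hilbert module V over ℝ_d, and s ∈ ρ_S(T*) = ρ_S(T). Then Q_s[T]* = Q_s[T*], hence Q_s[T*]^{-1} = (Q_s[T]^{-1})*, and moreover (T Q_s[T]^{-1})* = T* Q_s[T*]^{-1} (the right-hand side being the everywhere-defined closure of Q_s[T*]^{-1} T*). -/
noncomputable section

open scoped BigOperators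

open RightLinearOp in
/-- for a closed, densely defined right-linear operator `T` on a
Hilbert module and `s ∈ ρ_S(T*) = ρ_S(T)`: `Q_s[T]* = Q_s[T*]`, hence
`Q_s[T*]⁻¹ = (Q_s[T]⁻¹)*`, and `(T Q_s[T]⁻¹)* = T* Q_s[T*]⁻¹`. -/
theorem adjoint_of_qs_and_resolvent {d : ℕ} {V : Type*}
    [NormedAddCommGroup V] [InnerProductSpace ℝ V] [CompleteSpace V]
    [Module (Cl d)ᵐᵒᵖ V] [IsScalarTower ℝ (Cl d)ᵐᵒᵖ V]
    (T Tstar : RightLinearOp d V) (hT : T.IsClosedOp) (hdense : Dense T.dom)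
    -- `Tstar` is the adjoint of `T`:
    (hdom : Tstar.dom
      = {w : V | ∃ u : V, ∀ v ∈ T.dom, (inner ℝ u v : ℝ) = inner ℝ w (T.toFun v)})
    (hadj : ∀ w ∈ Tstar.dom, ∀ v ∈ T.dom,
      (inner ℝ (Tstar.toFun w) v : ℝ) = inner ℝ w (T.toFun v))
    -- `s ∈ ρ_S(T)`, with `Q_s[T]⁻¹ = QiT`:
    (s₀ : ℝ) (sv : Fin d → ℝ) (QiT : V →L[ℝ] V)
    (hQiT : T.IsQInv s₀ (pvNormSq s₀ sv) QiT) :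
    -- `Q_s[T*]⁻¹ = (Q_s[T]⁻¹)*`:
    Tstar.IsQInv s₀ (pvNormSq s₀ sv) (ContinuousLinearMap.adjoint QiT) ∧
    -- `Q_s[T]* = Q_s[T*]`: equality of domains ...
    ({w : V | ∃ u : V, ∀ v ∈ T.dom2,
        (inner ℝ u v : ℝ) = inner ℝ w (T.qs s₀ (pvNormSq s₀ sv) v)}
      = Tstar.dom2) ∧
    -- ... and of actions:
    (∀ w ∈ Tstar.dom2, ∀ v ∈ T.dom2,
      (inner ℝ (Tstar.qs s₀ (pvNormSq s₀ sv) w) v : ℝ)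
        = inner ℝ w (T.qs s₀ (pvNormSq s₀ sv) v)) ∧
    -- `(T Q_s[T]⁻¹)* = T* Q_s[T*]⁻¹`:
    (∀ w v : V,
      (inner ℝ (Tstar.toFun (ContinuousLinearMap.adjoint QiT w)) v : ℝ)
        = inner ℝ w (T.toFun (QiT v))) := by
  obtain ⟨hR, hLi, hRi⟩ := hQiT
  set n : ℝ := pvNormSq s₀ sv with hn
  -- real scalars act through the opposite Clifford algebra
  have hop : ∀ (r : ℝ) (v : V), (MulOpposite.op (algebraMap ℝ (Cl d) r)) • v = r • v := by
    intro r v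
    have h1 : MulOpposite.op (algebraMap ℝ (Cl d) r) = r • (1 : (Cl d)ᵐᵒᵖ) := by
      rw [Algebra.algebraMap_eq_smul_one, MulOpposite.op_smul, MulOpposite.op_one]
    rw [h1, smul_assoc, one_smul]
  have hsmem : ∀ (r : ℝ) ⦃v : V⦄, v ∈ T.dom → r • v ∈ T.dom := by
    intro r v hv; rw [← hop]; exact T.smul_mem _ hv
  have hTsm : ∀ (r : ℝ) ⦃v : V⦄, v ∈ T.dom → T.toFun (r • v) = r • T.toFun v := by
    intro r v hv; rw [← hop, T.map_smul' _ hv, hop]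
  -- uniqueness from density
  have hU : ∀ a b : V, (∀ v ∈ T.dom, (inner ℝ a v : ℝ) = inner ℝ b v) → a = b := by
    intro a b h
    have hc1 : Continuous fun v : V => (inner ℝ a v : ℝ) :=
      continuous_const.inner continuous_id
    have hc2 : Continuous fun v : V => (inner ℝ b v : ℝ) :=
      continuous_const.inner continuous_id
    have he := Continuous.ext_on hdense hc1 hc2 (fun v hv => h v hv)
    exact ext_inner_right ℝ fun v => congrFun he v
  have hQd : ∀ v : V, QiT v ∈ T.dom := fun v => (hR v).1
  have hQd2 : ∀ v : V, T.toFun (QiT v) ∈ T.dom := fun v => (hR v).2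
  -- `T ∘ QiT` is a continuous linear map, by the closed graph theorem
  let Alin : V →ₗ[ℝ] V :=
    { toFun := fun v => T.toFun (QiT v)
      map_add' := fun x y => by
        show T.toFun (QiT (x + y)) = T.toFun (QiT x) + T.toFun (QiT y)
        rw [map_add]; exact T.map_add' (hQd x) (hQd y)
      map_smul' := fun r x => by
        show T.toFun (QiT (r • x)) = r • T.toFun (QiT x)
        rw [map_smul]; exact hTsm r (hQd x) }
  have hgraph : IsClosed (Alin.graph : Set (V × V)) := by
    have heq : (Alin.graph : Set (V × V)) =
        (fun p : V × V => (QiT p.1, p.2)) ⁻¹'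
          {p : V × V | p.1 ∈ T.dom ∧ p.2 = T.toFun p.1} := by
      ext p
      simp only [Set.mem_preimage, Set.mem_setOf_eq, SetLike.mem_coe,
        LinearMap.mem_graph_iff]
      exact ⟨fun h => ⟨hQd p.1, h⟩, fun h => h.2⟩
    rw [heq]
    exact hT.preimage ((QiT.continuous.comp continuous_fst).prodMk continuous_snd)
  let A : V →L[ℝ] V := ContinuousLinearMap.ofIsClosedGraph hgraph
  have hA : ∀ v : V, A v = T.toFun (QiT v) := fun v => rfl
  -- `T²(QiT v)` in terms of lower order terms
  have hT2 : ∀ v : V, T.toFun (T.toFun (QiT v))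
      = v + (2 * s₀) • T.toFun (QiT v) + (-n) • QiT v := by
    intro v
    have h := hRi v
    unfold RightLinearOp.qs at h
    linear_combination (norm := module) h
  -- `QiT` commutes with `T` on `T.dom`
  have hcomm : ∀ v ∈ T.dom, QiT (T.toFun v) = T.toFun (QiT v) := by
    intro v hv
    have hz1 : QiT v ∈ T.dom := hQd v
    have hz2 : T.toFun (QiT v) ∈ T.dom := hQd2 v
    have hm1 : (2 * s₀) • T.toFun (QiT v) ∈ T.dom := hsmem _ hz2
    have hm2 : (-n) • QiT v ∈ T.dom := hsmem _ hz1
    have hT2v := hT2 v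
    have hTz2 : T.toFun (QiT v) ∈ T.dom2 := by
      refine ⟨hz2, ?_⟩
      rw [hT2v]; exact T.add_mem (T.add_mem hv hm1) hm2
    have e1 : T.toFun (T.toFun (T.toFun (QiT v)))
        = T.toFun v + (2 * s₀) • T.toFun (T.toFun (QiT v)) + (-n) • T.toFun (QiT v) := by
      rw [hT2v, T.map_add' (T.add_mem hv hm1) hm2, T.map_add' hv hm1,
        hTsm _ hz2, hTsm _ hz1, hT2v]
    have e2 : T.qs s₀ n (T.toFun (QiT v)) = T.toFun v := by
      unfold RightLinearOp.qs
      rw [e1]; module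
    calc QiT (T.toFun v) = QiT (T.qs s₀ n (T.toFun (QiT v))) := by rw [e2]
      _ = T.toFun (QiT v) := hLi _ hTz2
  set Qs : V →L[ℝ] V := ContinuousLinearMap.adjoint QiT with hQs
  set As : V →L[ℝ] V := ContinuousLinearMap.adjoint A with hAs
  -- key adjoint identity: ⟨A* u, v⟩ = ⟨QiT* u, T v⟩ on T.dom
  have hQA : ∀ (u : V), ∀ v ∈ T.dom, (inner ℝ (As u) v : ℝ) = inner ℝ (Qs u) (T.toFun v) := by
    intro u v hv
    rw [ContinuousLinearMap.adjoint_inner_left, ContinuousLinearMap.adjoint_inner_left,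
      hA, ← hcomm v hv]
  have hmemQ : ∀ u : V, Qs u ∈ Tstar.dom := by
    intro u; rw [hdom]
    exact ⟨As u, fun v hv => hQA u v hv⟩
  have hTsQ : ∀ u : V, Tstar.toFun (Qs u) = As u := by
    intro u
    refine hU _ _ fun v hv => ?_
    rw [hadj _ (hmemQ u) v hv, ← hQA u v hv]
  have hkey : ∀ (u : V), ∀ v ∈ T.dom,
      (inner ℝ (u + (2 * s₀) • As u + (-n) • Qs u) v : ℝ) = inner ℝ (As u) (T.toFun v) := by
    intro u v hv
    have e1 : (inner ℝ (As u) (T.toFun v) : ℝ) = inner ℝ u (A (T.toFun v)) :=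
      ContinuousLinearMap.adjoint_inner_left A _ u
    rw [e1, hA, hcomm v hv, hT2 v]
    have e2 : (inner ℝ (As u) v : ℝ) = inner ℝ u (T.toFun (QiT v)) := by
      rw [ContinuousLinearMap.adjoint_inner_left, hA]
    have e3 : (inner ℝ (Qs u) v : ℝ) = inner ℝ u (QiT v) :=
      ContinuousLinearMap.adjoint_inner_left QiT _ u
    simp only [inner_add_left, inner_add_right, real_inner_smul_left, real_inner_smul_right]
    rw [e2, e3]
  have hmemA : ∀ u : V, As u ∈ Tstar.dom := by
    intro u; rw [hdom]
    exact ⟨u + (2 * s₀) • As u + (-n) • Qs u, fun v hv => hkey u v hv⟩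
  have hTsA : ∀ u : V, Tstar.toFun (As u) = u + (2 * s₀) • As u + (-n) • Qs u := by
    intro u
    refine hU _ _ fun v hv => ?_
    rw [hadj _ (hmemA u) v hv, ← hkey u v hv]
  have hQmem2 : ∀ u : V, Qs u ∈ Tstar.dom2 := by
    intro u
    refine ⟨hmemQ u, ?_⟩
    rw [hTsQ u]; exact hmemA u
  have hQright : ∀ u : V, Tstar.qs s₀ n (Qs u) = u := by
    intro u
    unfold RightLinearOp.qs
    rw [hTsQ u, hTsA u]; module
  -- action identity of the adjoint of Q_s[T]
  have haction : ∀ w ∈ Tstar.dom2, ∀ v ∈ T.dom2,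
      (inner ℝ (Tstar.qs s₀ n w) v : ℝ) = inner ℝ w (T.qs s₀ n v) := by
    intro w hw v hv
    have h1 : (inner ℝ (Tstar.toFun w) v : ℝ) = inner ℝ w (T.toFun v) := hadj w hw.1 v hv.1
    have h2 : (inner ℝ (Tstar.toFun w) (T.toFun v) : ℝ) = inner ℝ w (T.toFun (T.toFun v)) :=
      hadj w hw.1 _ hv.2
    have h3 : (inner ℝ (Tstar.toFun (Tstar.toFun w)) v : ℝ) = inner ℝ (Tstar.toFun w) (T.toFun v) :=
      hadj _ hw.2 v hv.1
    unfold RightLinearOp.qs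
    simp only [inner_add_left, inner_sub_left, inner_add_right, inner_sub_right,
      real_inner_smul_left, real_inner_smul_right]
    linear_combination h3 + h2 - (2 * s₀) * h1
  have hQleft : ∀ w ∈ Tstar.dom2, Qs (Tstar.qs s₀ n w) = w := by
    intro w hw
    refine ext_inner_right ℝ fun x => ?_
    rw [hQs, ContinuousLinearMap.adjoint_inner_left]
    rw [haction w hw (QiT x) (hR x), hRi x]
  refine ⟨⟨hQmem2, hQleft, hQright⟩, ?_, haction, ?_⟩
  · -- domain equality
    ext w
    constructor
    · rintro ⟨u, hu⟩
      have hwu : w = Qs u := by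
        refine ext_inner_right ℝ fun x => ?_
        rw [ContinuousLinearMap.adjoint_inner_left]
        calc (inner ℝ w x : ℝ) = inner ℝ w (T.qs s₀ n (QiT x)) := by rw [hRi x]
          _ = inner ℝ u (QiT x) := (hu (QiT x) (hR x)).symm
      rw [hwu]; exact hQmem2 u
    · intro hw
      exact ⟨Tstar.qs s₀ n w, fun v hv => haction w hw v hv⟩
  · -- `(T Q_s[T]⁻¹)* = T* Q_s[T*]⁻¹`
    intro w v
    have hx2 := hQmem2 w
    have hqx := hQright w
    have hu2 := hR v
    have h2 : (inner ℝ (Tstar.toFun (Tstar.toFun (Qs w))) (T.toFun (QiT v)) : ℝ)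
        = inner ℝ (Tstar.toFun (Qs w)) (T.toFun (T.toFun (QiT v))) :=
      hadj _ hx2.2 _ hu2.2
    have h3 : (inner ℝ (Tstar.toFun (Qs w)) (QiT v) : ℝ) = inner ℝ (Qs w) (T.toFun (QiT v)) :=
      hadj _ hx2.1 _ hu2.1
    have hb : Tstar.toFun (Tstar.toFun (Qs w))
        = w + (2 * s₀) • Tstar.toFun (Qs w) + (-n) • Qs w := by
      have hqx' : Tstar.toFun (Tstar.toFun (Qs w)) - (2 * s₀) • Tstar.toFun (Qs w)
          + n • Qs w = w := hqx
      linear_combination (norm := module) hqx'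
    have hvq : v = T.qs s₀ n (QiT v) := (hRi v).symm
    conv_lhs => rw [hvq]
    unfold RightLinearOp.qs
    rw [hb] at h2
    simp only [inner_add_left, inner_sub_right, inner_add_right,
      real_inner_smul_left, real_inner_smul_right] at h2 ⊢
    linear_combination n * h3 - h2
end
end
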